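/- arXiv:1202.6174 — 5 statements merged into one kernel-verified Lean document; each statement's English description precedes it below -/
import Mathlib

section
/- Let G = (V,E) be a finite undirected graph and let S and T be placements of m pebbles on G. If S ≡ T (i.e., every connected component of G contains the same number of pebbles of S as of T), then there exists a permutation σ of Fin m and a pebble path from S to T ∘ σ. -/
/-- A single pebble move on a graph `G`: both `P` and `P'` are placements
(injective maps), and exactly one pebble moves along an edge of `G` while all
other pebbles remain stationary (the separation rule). -/
def PebbleMove {V : Type*} {ι : Type*} (G : SimpleGraph V) (P P' : ι → V) : Prop :=
  Function.Injective P ∧ Function.Injective P' ∧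
    ∃ i : ι, G.Adj (P i) (P' i) ∧ ∀ j : ι, j ≠ i → P j = P' j

/-- A pebble path from `S` to `T`: a finite sequence of placements starting at `S`,
ending at `T`, each consecutive pair related by a single pebble move. -/
def PebblePath {V : Type*} {ι : Type*} (G : SimpleGraph V) (S T : ι → V) : Prop :=
  Relation.ReflTransGen (PebbleMove G) S T

/-- Two placements have the same signature: every connected component of `G`
contains the same number of pebbles of each. -/
def SameSignature {V ι κ : Type*} (G : SimpleGraph V) (S : ι → V) (T : κ → V) : Prop :=
  ∀ K : G.ConnectedComponent,
    Nat.card {i : ι // G.connectedComponentMk (S i) = K} =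
    Nat.card {j : κ // G.connectedComponentMk (T j) = K}

section Slide
variable {V : Type*} {ι : Type*} [DecidableEq ι] {G : SimpleGraph V}

lemma update_inj {S : ι → V} (hS : Function.Injective S) (i : ι) {b : V}
    (hb : b ∉ Set.range S) : Function.Injective (Function.update S i b) := by
  intro k l hkl
  by_cases hk : k = i <;> by_cases hl : l = i
  · rw [hk, hl]
  · subst hk
    rw [Function.update_self, Function.update_of_ne hl] at hkl
    exact absurd ⟨l, hkl.symm⟩ hb
  · subst hl
    rw [Function.update_self, Function.update_of_ne hk] at hkl
    exact absurd ⟨k, hkl⟩ hb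
  · rw [Function.update_of_ne hk, Function.update_of_ne hl] at hkl
    exact hS hkl

lemma clearSlide : ∀ {u b : V} (w : G.Walk u b), w.IsPath →
    ∀ (S : ι → V), Function.Injective S → b ∉ Set.range S →
    (∀ v ∈ w.support.tail, v ∉ Set.range S) → ∀ i, S i = u →
    PebblePath G S (Function.update S i b) := by
  intro u b w
  induction w with
  | nil =>
    intro _ S _ hb _ i hi
    exact absurd ⟨i, hi⟩ hb
  | @cons u x b h w' ih =>
    intro hp S hS hb htail i hi
    have hx : x ∉ Set.range S := htail x (by simp [SimpleGraph.Walk.support_cons])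
    set S₁ := Function.update S i x with hS₁
    have hS₁inj : Function.Injective S₁ := update_inj hS i hx
    have hmove : PebbleMove G S S₁ := by
      refine ⟨hS, hS₁inj, i, ?_, fun j hj => (Function.update_of_ne hj _ _).symm⟩
      rw [hS₁, Function.update_self, hi]; exact h
    rcases eq_or_ne x b with rfl | hxb
    · exact Relation.ReflTransGen.single hmove
    · have hw'p : w'.IsPath := hp.of_cons
      have hbS₁ : b ∉ Set.range S₁ := by
        rintro ⟨k, hk⟩
        rcases eq_or_ne k i with rfl | hki
        · exact hxb (by simpa [hS₁] using hk)
        · exact hb ⟨k, by simpa [hS₁, Function.update_of_ne hki] using hk⟩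
      have htail₁ : ∀ v ∈ w'.support.tail, v ∉ Set.range S₁ := by
        intro v hv
        have hvS : v ∉ Set.range S := by
          apply htail
          rw [SimpleGraph.Walk.support_cons]
          exact List.mem_of_mem_tail hv
        have hvx : v ≠ x := by
          intro hvx
          have := hw'p.support_nodup
          rw [w'.support_eq_cons] at this
          exact (List.nodup_cons.mp this).1 (hvx ▸ hv)
        rintro ⟨k, hk⟩
        rcases eq_or_ne k i with rfl | hki
        · exact hvx (by simpa [hS₁] using hk.symm)
        · exact hvS ⟨k, by simpa [hS₁, Function.update_of_ne hki] using hk⟩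
      have hupd : Function.update S₁ i b = Function.update S i b := by
        simp [hS₁, Function.update_idem]
      have := ih hw'p S₁ hS₁inj hbS₁ htail₁ i (by simp [hS₁])
      rw [hupd] at this
      exact Relation.ReflTransGen.head hmove this

lemma lastSlide : ∀ {u b : V} (w : G.Walk u b), w.IsPath →
    ∀ (S : ι → V), Function.Injective S → b ∉ Set.range S →
    (∃ v ∈ w.support, v ∈ Set.range S) →
    ∃ i, S i ∈ w.support ∧ PebblePath G S (Function.update S i b) := by
  intro u b w
  induction w with
  | nil =>
    rintro _ S _ hb ⟨v, hv, hvS⟩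
    simp only [SimpleGraph.Walk.support_nil, List.mem_singleton] at hv
    exact absurd (hv ▸ hvS) hb
  | @cons u x b h w' ih =>
    intro hp S hS hb hex
    by_cases hsub : ∃ v ∈ w'.support, v ∈ Set.range S
    · obtain ⟨i, hi, hpath⟩ := ih hp.of_cons S hS hb hsub
      exact ⟨i, by simp [SimpleGraph.Walk.support_cons, hi], hpath⟩
    · obtain ⟨v, hv, hvS⟩ := hex
      have hvu : v = u := by
        rw [SimpleGraph.Walk.support_cons, List.mem_cons] at hv
        rcases hv with rfl | hv
        · rfl
        · exact absurd ⟨v, hv, hvS⟩ hsub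
      obtain ⟨i, hi⟩ := hvu ▸ hvS
      refine ⟨i, by simp [SimpleGraph.Walk.support_cons, hi], ?_⟩
      apply clearSlide (SimpleGraph.Walk.cons h w') hp S hS hb _ i hi
      intro v' hv'
      rw [SimpleGraph.Walk.support_cons, List.tail_cons] at hv'
      exact fun hv'S => hsub ⟨v', hv', hv'S⟩

end Slide

section Main
open Finset
variable {V : Type*} [Fintype V] (G : SimpleGraph V) {m : ℕ} (T : Fin m → V)

open Classical in
noncomputable def nmiss (S : Fin m → V) : ℕ :=
  (Finset.univ.filter fun j => T j ∉ Set.range S).card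

open Classical in
noncomputable def pairsF (S : Fin m → V) : Finset (Fin m × Fin m) :=
  Finset.univ.filter fun p => S p.1 ∉ Set.range T ∧ T p.2 ∉ Set.range S ∧
    G.connectedComponentMk (S p.1) = G.connectedComponentMk (T p.2)

open Classical in
noncomputable def Dmin (S : Fin m → V) : ℕ :=
  if h : (pairsF G T S).Nonempty then
    ((pairsF G T S).image fun p => G.dist (S p.1) (T p.2)).min' (h.image _)
  else 0

noncomputable def meas (S : Fin m → V) : ℕ :=
  nmiss T S * Fintype.card V + Dmin G T S

lemma mem_pairsF {S : Fin m → V} {p : Fin m × Fin m} :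
    p ∈ pairsF G T S ↔ S p.1 ∉ Set.range T ∧ T p.2 ∉ Set.range S ∧
      G.connectedComponentMk (S p.1) = G.connectedComponentMk (T p.2) := by
  classical
  simp [pairsF]

lemma Dmin_le {S : Fin m → V} {p : Fin m × Fin m} (hp : p ∈ pairsF G T S) :
    Dmin G T S ≤ G.dist (S p.1) (T p.2) := by
  classical
  rw [Dmin, dif_pos ⟨p, hp⟩]
  exact Finset.min'_le _ _ (Finset.mem_image_of_mem _ hp)

lemma Dmin_attained {S : Fin m → V} (h : (pairsF G T S).Nonempty) :
    ∃ p ∈ pairsF G T S, G.dist (S p.1) (T p.2) = Dmin G T S := by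
  classical
  rw [Dmin, dif_pos h]
  have := Finset.min'_mem ((pairsF G T S).image fun p => G.dist (S p.1) (T p.2)) (h.image _)
  rw [Finset.mem_image] at this
  obtain ⟨p, hp, hpe⟩ := this
  exact ⟨p, hp, hpe⟩

lemma Dmin_lt_card (hV : 0 < Fintype.card V) (S : Fin m → V) :
    Dmin G T S < Fintype.card V := by
  classical
  by_cases h : (pairsF G T S).Nonempty
  · obtain ⟨p, hp, hpe⟩ := Dmin_attained G T h
    rw [← hpe]
    have hreach : G.Reachable (S p.1) (T p.2) :=
      SimpleGraph.ConnectedComponent.exact ((mem_pairsF G T).mp hp).2.2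
    obtain ⟨w0, hw0⟩ := hreach.exists_walk_length_eq_dist
    calc G.dist (S p.1) (T p.2) ≤ w0.bypass.length := SimpleGraph.dist_le _
      _ < Fintype.card V := w0.bypass_isPath.length_lt
  · rw [Dmin, dif_neg h]; exact hV

open Classical in
lemma natcard_filter {n : ℕ} (P : Fin n → Prop) :
    Nat.card {i // P i} = (Finset.univ.filter fun i => P i).card := by
  classical
  rw [Nat.card_eq_fintype_card]
  rw [Fintype.card_subtype]

lemma pairs_nonempty {S : Fin m → V} (hS : Function.Injective S)
    (hT : Function.Injective T)
    (hsig : SameSignature G S T) {j0 : Fin m} (hj0 : T j0 ∉ Set.range S) :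
    (pairsF G T S).Nonempty := by
  classical
  by_contra hno
  rw [Finset.not_nonempty_iff_eq_empty] at hno
  set K := G.connectedComponentMk (T j0) with hK
  have hall : ∀ i, G.connectedComponentMk (S i) = K → S i ∈ Set.range T := by
    intro i hi
    by_contra hiT
    have : (i, j0) ∈ pairsF G T S := (mem_pairsF G T).mpr ⟨hiT, hj0, hi⟩
    simp [hno] at this
  set AS := (Finset.univ.filter fun i => G.connectedComponentMk (S i) = K).image S with hAS
  set BT := (Finset.univ.filter fun j => G.connectedComponentMk (T j) = K).image T with hBT
  have hcard : AS.card = BT.card := by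
    rw [hAS, hBT, Finset.card_image_of_injective _ hS, Finset.card_image_of_injective _ hT]
    rw [← natcard_filter, ← natcard_filter]
    exact hsig K
  have hsub : AS ⊆ BT := by
    intro v hv
    rw [hAS, Finset.mem_image] at hv
    obtain ⟨i, hi, rfl⟩ := hv
    rw [Finset.mem_filter] at hi
    obtain ⟨j', hj'⟩ := hall i hi.2
    rw [hBT, Finset.mem_image]
    exact ⟨j', Finset.mem_filter.mpr ⟨Finset.mem_univ _, by rw [hj']; exact hi.2⟩, hj'⟩
  have heq : AS = BT := Finset.eq_of_subset_of_card_le hsub (le_of_eq hcard.symm)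
  have hmem : T j0 ∈ BT := by
    rw [hBT, Finset.mem_image]
    exact ⟨j0, Finset.mem_filter.mpr ⟨Finset.mem_univ _, rfl⟩, rfl⟩
  rw [← heq, hAS, Finset.mem_image] at hmem
  obtain ⟨i, _, hi⟩ := hmem
  exact hj0 ⟨i, hi⟩


open Classical in
lemma main_aux (hT : Function.Injective T) :
    ∀ (N : ℕ) (S : Fin m → V), Function.Injective S → SameSignature G S T →
      meas G T S ≤ N → ∃ σ : Equiv.Perm (Fin m), PebblePath G S (T ∘ σ) := by
  intro N
  induction N using Nat.strong_induction_on with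
  | _ N ih =>
  intro S hS hsig hm
  by_cases h0 : ∀ j, T j ∈ Set.range S
  · -- base case: ranges equal, pure permutation
    choose f hf using fun j => (h0 j)
    have hfinj : Function.Injective f := by
      intro j1 j2 hj
      apply hT
      rw [← hf j1, ← hf j2, hj]
    have hfbij : Function.Bijective f := Finite.injective_iff_bijective.mp hfinj
    set σ := Equiv.ofBijective f hfbij with hσ
    refine ⟨σ.symm, ?_⟩
    have : T ∘ σ.symm = S := by
      funext j
      have : S (f (σ.symm j)) = T (σ.symm j) := hf _
      have h2 : f (σ.symm j) = j := σ.apply_symm_apply j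
      simp only [Function.comp_apply]
      rw [← this, h2]
    rw [this]
    exact Relation.ReflTransGen.refl
  · push_neg at h0
    obtain ⟨j0, hj0⟩ := h0
    have hne : (pairsF G T S).Nonempty := pairs_nonempty G T hS hT hsig hj0
    obtain ⟨p, hp, hd⟩ := Dmin_attained G T hne
    obtain ⟨hiT, hjS, hcomp⟩ := (mem_pairsF G T).mp hp
    have hreach : G.Reachable (S p.1) (T p.2) := SimpleGraph.ConnectedComponent.exact hcomp
    obtain ⟨w0, hw0⟩ := hreach.exists_walk_length_eq_dist
    set w := w0.bypass with hwdef
    have hwp : w.IsPath := w0.bypass_isPath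
    have hwlen : w.length = G.dist (S p.1) (T p.2) :=
      le_antisymm (hw0 ▸ w0.length_bypass_le) (SimpleGraph.dist_le w)
    obtain ⟨i', hi'sup, hpath⟩ :=
      lastSlide w hwp S hS hjS ⟨S p.1, w.start_mem_support, ⟨p.1, rfl⟩⟩
    set S' := Function.update S p.1 (T p.2) with hS'def -- dummy, fixed below
    clear hS'def
    set S'' := Function.update S i' (T p.2) with hS''def
    have hS''inj : Function.Injective S'' := update_inj hS i' hjS
    -- basic facts about the moved pebble
    have hzb : S i' ≠ T p.2 := fun e => hjS (e ▸ ⟨i', rfl⟩)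
    have hcompz : G.connectedComponentMk (S i') = G.connectedComponentMk (S p.1) :=
      (SimpleGraph.ConnectedComponent.sound (w.takeUntil _ hi'sup).reachable).symm
    have hsig'' : SameSignature G S'' T := by
      intro K
      rw [← hsig K]
      apply Nat.card_congr
      apply Equiv.subtypeEquivRight
      intro k
      rcases eq_or_ne k i' with rfl | hk
      · rw [hS''def, Function.update_self, ← hcomp, ← hcompz]
      · rw [hS''def, Function.update_of_ne hk]
    -- range description
    have hrange : ∀ v, v ∈ Set.range S'' ↔ v = T p.2 ∨ (v ∈ Set.range S ∧ v ≠ S i') := by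
      intro v
      constructor
      · rintro ⟨k, hk⟩
        rcases eq_or_ne k i' with rfl | hki
        · left; rw [← hk, hS''def, Function.update_self]
        · right
          rw [hS''def, Function.update_of_ne hki] at hk
          exact ⟨⟨k, hk⟩, fun e => hki (hS (hk.trans e))⟩
      · rintro (rfl | ⟨⟨k, hk⟩, hv⟩)
        · exact ⟨i', by rw [hS''def, Function.update_self]⟩
        · refine ⟨k, ?_⟩
          have hki : k ≠ i' := fun e => hv (e ▸ hk).symm
          rw [hS''def, Function.update_of_ne hki, hk]
    -- distance bound for the blocked case
    have hdistz : i' ≠ p.1 → G.dist (S p.1) (S i') < w.length := by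
      intro _
      have h1 : (w.takeUntil _ hi'sup).length + (w.dropUntil _ hi'sup).length = w.length := by
        rw [← SimpleGraph.Walk.length_append, SimpleGraph.Walk.take_spec]
      have h2 : (w.dropUntil _ hi'sup).length ≠ 0 :=
        fun e => hzb (SimpleGraph.Walk.eq_of_length_eq_zero e)
      calc G.dist (S p.1) (S i') ≤ (w.takeUntil _ hi'sup).length :=
            SimpleGraph.dist_le _
        _ < w.length := by omega
    have hVpos : 0 < Fintype.card V := Fintype.card_pos_iff.mpr ⟨T p.2⟩
    -- key: measure decreases
    have hmeas : meas G T S'' < meas G T S := by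
      by_cases hzT : S i' ∈ Set.range T
      · -- blocked pebble sat on a target: nmiss equal, Dmin decreases
        obtain ⟨j'', hj''⟩ := hzT
        have hii' : p.1 ≠ i' := fun e => hiT ⟨j'', by rw [hj'', e]⟩
        have hj''notmiss : j'' ∉ Finset.univ.filter fun j => T j ∉ Set.range S := by
          rw [Finset.mem_filter]
          push_neg
          intro _
          rw [hj'']
          exact ⟨i', rfl⟩
        have hjmem2 : p.2 ∈ Finset.univ.filter fun j => T j ∉ Set.range S :=
          Finset.mem_filter.mpr ⟨Finset.mem_univ _, hjS⟩
        have hzi'notrange : S i' ∉ Set.range S'' := by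
          rw [hrange]
          push_neg
          exact ⟨hzb, fun _ => rfl⟩
        have hnm : nmiss T S'' = nmiss T S := by
          have hfil : (Finset.univ.filter fun j => T j ∉ Set.range S'') =
              insert j'' ((Finset.univ.filter fun j => T j ∉ Set.range S).erase p.2) := by
            ext j'
            rw [Finset.mem_insert, Finset.mem_erase, Finset.mem_filter, Finset.mem_filter]
            constructor
            · intro ⟨_, hj'⟩
              by_cases hjj : j' = j''
              · exact Or.inl hjj
              · right
                have hne1 : T j' ≠ S i' := by
                  intro e
                  exact hjj (hT (e.trans hj''.symm))
                have hne2 : j' ≠ p.2 := by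
                  intro e
                  exact hj' ((hrange _).mpr (Or.inl (by rw [e])))
                refine ⟨hne2, Finset.mem_univ _, fun hr => ?_⟩
                exact hj' ((hrange _).mpr (Or.inr ⟨hr, hne1⟩))
            · rintro (rfl | ⟨hne, _, hj'⟩)
              · refine ⟨Finset.mem_univ _, ?_⟩
                rw [hj'']
                exact hzi'notrange
              · refine ⟨Finset.mem_univ _, fun hr => ?_⟩
                rw [hrange] at hr
                rcases hr with e | ⟨hr, _⟩
                · exact hne (hT e)
                · exact hj' hr
          have hj''e : j'' ∉ (Finset.univ.filter fun j => T j ∉ Set.range S).erase p.2 :=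
            fun h => hj''notmiss (Finset.mem_of_mem_erase h)
          rw [nmiss, nmiss, hfil, Finset.card_insert_of_notMem hj''e,
            Finset.card_erase_of_mem hjmem2]
          have : 0 < (Finset.univ.filter fun j => T j ∉ Set.range S).card :=
            Finset.card_pos.mpr ⟨p.2, hjmem2⟩
          omega
        have hpair : (p.1, j'') ∈ pairsF G T S'' := by
          rw [mem_pairsF]
          refine ⟨?_, ?_, ?_⟩
          · rw [hS''def, Function.update_of_ne hii']; exact hiT
          · rw [hj'']
            exact hzi'notrange
          · rw [hS''def]
            simp only
            rw [Function.update_of_ne hii', hj'']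
            exact hcompz.symm
        have hDlt : Dmin G T S'' < Dmin G T S := by
          calc Dmin G T S'' ≤ G.dist (S'' (p.1, j'').1) (T (p.1, j'').2) := Dmin_le G T hpair
            _ = G.dist (S p.1) (S i') := by
                rw [hS''def]; simp only
                rw [Function.update_of_ne hii', hj'']
            _ < w.length := hdistz (fun e => hii' e.symm)
            _ = Dmin G T S := by rw [hwlen, hd]
        rw [meas, meas, hnm]
        omega
      · -- blocked pebble not on a target: nmiss decreases
        have hfil : (Finset.univ.filter fun j => T j ∉ Set.range S'') =
            (Finset.univ.filter fun j => T j ∉ Set.range S).erase p.2 := by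
          ext j'
          rw [Finset.mem_erase, Finset.mem_filter, Finset.mem_filter]
          constructor
          · intro ⟨_, hj'⟩
            have hne1 : T j' ≠ T p.2 := by
              intro e
              exact hj' ((hrange _).mpr (Or.inl e))
            refine ⟨fun e => hne1 (e ▸ rfl), Finset.mem_univ _, fun hr => ?_⟩
            apply hj'
            rw [hrange]
            right
            exact ⟨hr, fun e => hzT (e ▸ ⟨j', rfl⟩ : S i' ∈ Set.range T)⟩
          · intro ⟨hne, _, hj'⟩
            refine ⟨Finset.mem_univ _, fun hr => ?_⟩
            rw [hrange] at hr
            rcases hr with e | ⟨hr, _⟩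
            · exact hne (hT e)
            · exact hj' hr
        have hjmem2 : p.2 ∈ Finset.univ.filter fun j => T j ∉ Set.range S :=
          Finset.mem_filter.mpr ⟨Finset.mem_univ _, hjS⟩
        have hnm : nmiss T S'' = nmiss T S - 1 := by
          rw [nmiss, nmiss, hfil, Finset.card_erase_of_mem hjmem2]
        have hnmpos : 0 < nmiss T S := Finset.card_pos.mpr ⟨p.2, hjmem2⟩
        have hD'' : Dmin G T S'' < Fintype.card V := Dmin_lt_card G T hVpos S''
        rw [meas, meas, hnm]
        have : (nmiss T S - 1) * Fintype.card V + Fintype.card V = nmiss T S * Fintype.card V := by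
          rw [← Nat.succ_mul, Nat.succ_eq_add_one, Nat.sub_add_cancel hnmpos]
        omega
    obtain ⟨σ, hσ⟩ := ih (meas G T S'') (lt_of_lt_of_le hmeas hm) S'' hS''inj hsig'' le_rfl
    exact ⟨σ, hpath.trans hσ⟩

end Main

/-- If `S ≡ T`, then there is a permutation `σ` and a pebble path from `S` to `T ∘ σ`. -/
theorem pebblePath_of_sameSignature {V : Type*} [Fintype V] (G : SimpleGraph V) {m : ℕ}
    (S T : Fin m → V) (hS : Function.Injective S) (hT : Function.Injective T)
    (h : SameSignature G S T) :
    ∃ σ : Equiv.Perm (Fin m), PebblePath G S (T ∘ σ) := by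
  exact main_aux G T hT (meas G T S) S hS h le_rfl
end

section
/- Let G = (V,E) be a finite undirected graph and let S and T be placements of m pebbles on G. There exists a permutation σ of Fin m and a pebble path from S to T ∘ σ if and only if S ≡ T (every connected component of G contains the same number of pebbles of S as of T). This characterizes the solvability of the unlabeled pebble motion problem P(G,S,T,m). -/
namespace UnlabeledPebble

open SimpleGraph Finset

variable {V : Type*}

/-- The set-level (unlabeled) pebble move. -/
def FMove [DecidableEq V] (G : SimpleGraph V) (A B : Finset V) : Prop :=
  ∃ u v, u ∈ A ∧ v ∉ A ∧ G.Adj u v ∧ B = insert v (A.erase u)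

open Classical in
/-- Number of pebbles of `A` in the component `K`. -/
noncomputable def cnt (G : SimpleGraph V) (A : Finset V) (K : G.ConnectedComponent) : ℕ :=
  (A.filter fun x => G.connectedComponentMk x = K).card

lemma cnt_fmove [DecidableEq V] {G : SimpleGraph V} {A B : Finset V} (h : FMove G A B)
    (K : G.ConnectedComponent) : cnt G B K = cnt G A K := by
  classical
  obtain ⟨u, v, hu, hv, hadj, rfl⟩ := h
  have hcomp : G.connectedComponentMk u = G.connectedComponentMk v :=
    ConnectedComponent.sound hadj.reachable
  unfold cnt
  rw [Finset.filter_insert, Finset.filter_erase]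
  by_cases hK : G.connectedComponentMk v = K
  · rw [if_pos hK]
    have huK : u ∈ A.filter fun x => G.connectedComponentMk x = K :=
      Finset.mem_filter.mpr ⟨hu, hcomp.trans hK⟩
    have hvnot : v ∉ (A.filter fun x => G.connectedComponentMk x = K).erase u := by
      intro hvmem
      exact hv (Finset.mem_filter.mp (Finset.mem_of_mem_erase hvmem)).1
    rw [Finset.card_insert_of_notMem hvnot, Finset.card_erase_of_mem huK]
    have hpos : 0 < (A.filter fun x => G.connectedComponentMk x = K).card :=
      Finset.card_pos.mpr ⟨u, huK⟩
    omega
  · rw [if_neg hK, Finset.erase_eq_of_notMem]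
    intro humem
    exact hK ((hcomp.symm.trans (Finset.mem_filter.mp humem).2))

lemma cnt_rtg [DecidableEq V] {G : SimpleGraph V} {A B : Finset V}
    (h : Relation.ReflTransGen (FMove G) A B) (K : G.ConnectedComponent) :
    cnt G A K = cnt G B K := by
  induction h with
  | refl => rfl
  | tail _ hmv ih => exact ih.trans (cnt_fmove hmv K).symm

lemma getVert_inj {G : SimpleGraph V} {a t : V} {w : G.Walk a t} (hw : w.IsPath) :
    ∀ i j, i ≤ w.length → j ≤ w.length → w.getVert i = w.getVert j → i = j := by
  induction w with
  | nil => intro i j hi hj _; simp only [SimpleGraph.Walk.length_nil, Nat.le_zero] at hi hj; omega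
  | @cons u x y hadj q ih =>
    intro i j hi hj hij
    rw [SimpleGraph.Walk.cons_isPath_iff] at hw
    have hlen : (SimpleGraph.Walk.cons hadj q).length = q.length + 1 := rfl
    match i, j with
    | 0, 0 => rfl
    | 0, j + 1 =>
      exfalso
      have h1 : (SimpleGraph.Walk.cons hadj q).getVert 0 = u := SimpleGraph.Walk.getVert_zero _
      have h2 : (SimpleGraph.Walk.cons hadj q).getVert (j + 1) = q.getVert j := rfl
      have : q.getVert j ∈ q.support :=
        SimpleGraph.Walk.mem_support_iff_exists_getVert.mpr ⟨j, rfl, by omega⟩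
      rw [h1, h2] at hij
      exact hw.2 (hij ▸ this)
    | i + 1, 0 =>
      exfalso
      have h1 : (SimpleGraph.Walk.cons hadj q).getVert 0 = u := SimpleGraph.Walk.getVert_zero _
      have h2 : (SimpleGraph.Walk.cons hadj q).getVert (i + 1) = q.getVert i := rfl
      have : q.getVert i ∈ q.support :=
        SimpleGraph.Walk.mem_support_iff_exists_getVert.mpr ⟨i, rfl, by omega⟩
      rw [h1, h2] at hij
      exact hw.2 (hij.symm ▸ this)
    | i + 1, j + 1 =>
      have := ih hw.1 i j (by omega) (by omega) hij
      omega

/-- Sliding pebbles along an initial segment of a path: the net effect is that the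
pebble at the start of the path disappears and a pebble appears at the first
unoccupied vertex of the path. -/
lemma slide [DecidableEq V] {G : SimpleGraph V} {a t : V} (w : G.Walk a t) (hw : w.IsPath) :
    ∀ j, 1 ≤ j → j ≤ w.length → ∀ A : Finset V, (∀ i, i < j → w.getVert i ∈ A) →
      w.getVert j ∉ A →
      Relation.ReflTransGen (FMove G) A (insert (w.getVert j) (A.erase a)) := by
  intro j
  induction j with
  | zero => omega
  | succ j ih =>
    intro _ hle A hmem hnot
    have hgv0 : w.getVert 0 = a := w.getVert_zero
    rcases Nat.eq_zero_or_pos j with hj0 | hjpos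
    · subst hj0
      refine Relation.ReflTransGen.single ⟨a, w.getVert 1, ?_, hnot, ?_, ?_⟩
      · exact hgv0 ▸ hmem 0 (by omega)
      · have := w.adj_getVert_succ (by omega : 0 < w.length)
        rwa [hgv0] at this
      · rfl
    · -- first move the pebble at position j one step forward, then use IH
      set u := w.getVert j with hu
      set v := w.getVert (j + 1) with hvdef
      have huA : u ∈ A := hmem j (by omega)
      have hadj : G.Adj u v := w.adj_getVert_succ (by omega)
      set A1 : Finset V := insert v (A.erase u) with hA1
      have step1 : FMove G A A1 := ⟨u, v, huA, hnot, hadj, rfl⟩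
      have huv : u ≠ v := fun h => hnot (h ▸ huA)
      have hinj := getVert_inj hw
      have hmem1 : ∀ i, i < j → w.getVert i ∈ A1 := by
        intro i hi
        have hiu : w.getVert i ≠ u := by
          intro h
          have := hinj i j (by omega) (by omega) h
          omega
        exact Finset.mem_insert_of_mem (Finset.mem_erase.mpr ⟨hiu, hmem i (by omega)⟩)
      have hnot1 : w.getVert j ∉ A1 := by
        intro h
        rcases Finset.mem_insert.mp h with h | h
        · exact huv h
        · exact (Finset.mem_erase.mp h).1 rfl
      have hrest := ih hjpos (by omega) A1 hmem1 hnot1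
      have hau : a ≠ u := by
        intro h
        have := hinj 0 j (by omega) (by omega) (hgv0.trans h)
        omega
      have hav : a ≠ v := fun h => hnot (h ▸ (hgv0 ▸ hmem 0 (by omega)))
      have hfinal : insert (w.getVert j) (A1.erase a) = insert v (A.erase a) := by
        rw [hA1, Finset.erase_insert_of_ne hav.symm, Finset.erase_right_comm, ← hu]
        rw [Finset.insert_comm]
        congr 1
        exact Finset.insert_erase (Finset.mem_erase.mpr ⟨hau.symm, huA⟩)
      rw [hfinal] at hrest
      exact Relation.ReflTransGen.head step1 hrest

lemma exists_pair {G : SimpleGraph V} {A B : Finset V}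
    (hcnt : ∀ K, cnt G A K = cnt G B K) (hne : A ≠ B) :
    ∃ a t, a ∈ A ∧ a ∉ B ∧ t ∈ B ∧ t ∉ A ∧
      G.connectedComponentMk a = G.connectedComponentMk t := by
  classical
  have key : ∀ (A' B' : Finset V), (∀ K, cnt G A' K = cnt G B' K) →
      ∀ x, x ∈ A' → x ∉ B' → ∃ t, t ∈ B' ∧ t ∉ A' ∧
        G.connectedComponentMk x = G.connectedComponentMk t := by
    intro A' B' hc x hxA hxB
    by_contra hcon
    push_neg at hcon
    set K := G.connectedComponentMk x with hK
    have hsub : (B'.filter fun y => G.connectedComponentMk y = K) ⊆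
        (A'.filter fun y => G.connectedComponentMk y = K) := by
      intro y hy
      obtain ⟨hyB, hyK⟩ := Finset.mem_filter.mp hy
      by_contra hyA
      have hyA' : y ∉ A' := fun h => hyA (Finset.mem_filter.mpr ⟨h, hyK⟩)
      exact hcon y hyB hyA' hyK.symm
    have hcard : (A'.filter fun y => G.connectedComponentMk y = K).card ≤
        (B'.filter fun y => G.connectedComponentMk y = K).card := by
      have := hc K
      unfold cnt at this
      omega
    have heq := Finset.eq_of_subset_of_card_le hsub hcard
    have hxmem : x ∈ A'.filter fun y => G.connectedComponentMk y = K :=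
      Finset.mem_filter.mpr ⟨hxA, hK.symm⟩
    rw [← heq] at hxmem
    exact hxB (Finset.mem_filter.mp hxmem).1
  have : ∃ x, (x ∈ A ∧ x ∉ B) ∨ (x ∈ B ∧ x ∉ A) := by
    by_contra hcon
    push_neg at hcon
    apply hne
    ext x
    have := hcon x
    tauto
  obtain ⟨x, hx | hx⟩ := this
  · obtain ⟨t, h1, h2, h3⟩ := key A B hcnt x hx.1 hx.2
    exact ⟨x, t, hx.1, hx.2, h1, h2, h3⟩
  · obtain ⟨t, h1, h2, h3⟩ := key B A (fun K => (hcnt K).symm) x hx.1 hx.2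
    exact ⟨t, x, h1, h2, hx.1, hx.2, h3.symm⟩

/-- The minimal distance between a pebble of `A` not in `B` and a target of `B`
not covered by `A`, within a common component. -/
noncomputable def minD (G : SimpleGraph V) (A B : Finset V) : ℕ :=
  sInf {d | ∃ a, a ∈ A ∧ a ∉ B ∧ ∃ t, t ∈ B ∧ t ∉ A ∧
    G.connectedComponentMk a = G.connectedComponentMk t ∧ G.dist a t = d}

lemma minD_le {G : SimpleGraph V} {A B : Finset V} {a t : V} (h1 : a ∈ A) (h2 : a ∉ B)
    (h3 : t ∈ B) (h4 : t ∉ A)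
    (h5 : G.connectedComponentMk a = G.connectedComponentMk t) :
    minD G A B ≤ G.dist a t :=
  Nat.sInf_le (by exact ⟨a, h1, h2, t, h3, h4, h5, rfl⟩)

lemma dist_lt_card [Fintype V] {G : SimpleGraph V} {a t : V} (h : G.Reachable a t) :
    G.dist a t < Fintype.card V := by
  obtain ⟨p, hp, hl⟩ := h.exists_path_of_dist
  rw [← hl]
  exact hp.length_lt

lemma minD_lt_card [Fintype V] {G : SimpleGraph V} {A B : Finset V}
    (hcnt : ∀ K, cnt G A K = cnt G B K) (hne : A ≠ B) :
    minD G A B < Fintype.card V := by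
  obtain ⟨a, t, h1, h2, h3, h4, h5⟩ := exists_pair hcnt hne
  exact lt_of_le_of_lt (minD_le h1 h2 h3 h4 h5) (dist_lt_card (ConnectedComponent.exact h5))

/-- Main reachability lemma at the Finset level: equality of componentwise counts
implies that `B` is reachable from `A` by set-level pebble moves. -/
lemma reach [Fintype V] [DecidableEq V] {G : SimpleGraph V} :
    ∀ (n : ℕ) (A B : Finset V), (∀ K, cnt G A K = cnt G B K) →
      (A \ B).card * Fintype.card V + minD G A B ≤ n →
      Relation.ReflTransGen (FMove G) A B := by
  classical
  intro n
  induction n using Nat.strong_induction_on with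
  | _ n ih =>
  intro A B hcnt hΦ
  by_cases hne : A = B
  · exact hne ▸ Relation.ReflTransGen.refl
  set N := Fintype.card V with hN
  have hnonempty : {d | ∃ a, a ∈ A ∧ a ∉ B ∧ ∃ t, t ∈ B ∧ t ∉ A ∧
      G.connectedComponentMk a = G.connectedComponentMk t ∧ G.dist a t = d}.Nonempty := by
    obtain ⟨a, t, h1, h2, h3, h4, h5⟩ := exists_pair hcnt hne
    exact ⟨G.dist a t, a, h1, h2, t, h3, h4, h5, rfl⟩
  have hdmem : minD G A B ∈ {d | ∃ a, a ∈ A ∧ a ∉ B ∧ ∃ t, t ∈ B ∧ t ∉ A ∧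
      G.connectedComponentMk a = G.connectedComponentMk t ∧ G.dist a t = d} :=
    Nat.sInf_mem hnonempty
  obtain ⟨a, haA, haB, t, htB, htA, hcomp, hdist⟩ := hdmem
  have hreach : G.Reachable a t := ConnectedComponent.exact hcomp
  obtain ⟨w, hwp, hwl⟩ := hreach.exists_path_of_dist
  have hwd : w.length = minD G A B := by rw [hwl, hdist]
  have hat : a ≠ t := fun h => haB (h ▸ htB)
  have hd1 : 1 ≤ w.length := by
    rcases Nat.eq_zero_or_pos w.length with h | h
    · exact absurd (SimpleGraph.Walk.eq_of_length_eq_zero h) hat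
    · omega
  have hex : ∃ i, w.getVert i ∉ A := ⟨w.length, by rw [w.getVert_length]; exact htA⟩
  set j := Nat.find hex with hjdef
  have hj : w.getVert j ∉ A := Nat.find_spec hex
  have hjle : j ≤ w.length := Nat.find_le (by rw [w.getVert_length]; exact htA)
  have hmem : ∀ i, i < j → w.getVert i ∈ A := fun i hi => not_not.mp (Nat.find_min hex hi)
  have hj1 : 1 ≤ j := by
    rcases Nat.eq_zero_or_pos j with h | h
    · exfalso; apply hj; rw [h, w.getVert_zero]; exact haA
    · omega
  set v := w.getVert j with hv
  set A' : Finset V := insert v (A.erase a) with hA'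
  have hstep : Relation.ReflTransGen (FMove G) A A' := slide w hwp j hj1 hjle A hmem hj
  have hcntA' : ∀ K, cnt G A' K = cnt G B K := fun K => (cnt_rtg hstep K).symm.trans (hcnt K)
  by_cases hA'B : A' = B
  · exact hA'B ▸ hstep
  have hcABpos : a ∈ A \ B := Finset.mem_sdiff.mpr ⟨haA, haB⟩
  have hcpos : 1 ≤ (A \ B).card := Finset.card_pos.mpr ⟨a, hcABpos⟩
  have hva : v ≠ a := fun h => hj (h ▸ haA)
  by_cases hvB : v ∈ B
  · -- the number of misplaced pebbles decreases
    have hsd : A' \ B = (A \ B).erase a := by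
      ext x
      simp only [hA', Finset.mem_sdiff, Finset.mem_insert, Finset.mem_erase]
      constructor
      · rintro ⟨hx | hx, hxB⟩
        · exact absurd (hx ▸ hvB) hxB
        · exact ⟨hx.1, hx.2, hxB⟩
      · rintro ⟨hxa, hxA, hxB⟩
        exact ⟨Or.inr ⟨hxa, hxA⟩, hxB⟩
    have hcard : (A' \ B).card = (A \ B).card - 1 := by
      rw [hsd, Finset.card_erase_of_mem hcABpos]
    have hΦ' : (A' \ B).card * N + minD G A' B < n := by
      have h1 : minD G A' B < N := minD_lt_card hcntA' hA'B
      have h3 : ((A \ B).card - 1) * N + N = (A \ B).card * N := by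
        have hc : (A \ B).card - 1 + 1 = (A \ B).card := by omega
        calc ((A \ B).card - 1) * N + N = (((A \ B).card - 1) + 1) * N :=
              (Nat.succ_mul _ _).symm
          _ = (A \ B).card * N := by rw [hc]
      have h2 : (A' \ B).card * N + minD G A' B < ((A \ B).card - 1) * N + N := by
        rw [hcard]; omega
      omega
    exact hstep.trans (ih _ hΦ' A' B hcntA' le_rfl)
  · -- same number of misplaced pebbles, but the minimal distance decreases
    have hsd : A' \ B = insert v ((A \ B).erase a) := by
      ext x
      simp only [hA', Finset.mem_sdiff, Finset.mem_insert, Finset.mem_erase]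
      constructor
      · rintro ⟨hx | hx, hxB⟩
        · exact Or.inl hx
        · exact Or.inr ⟨hx.1, hx.2, hxB⟩
      · rintro (hx | ⟨hxa, hxA, hxB⟩)
        · exact ⟨Or.inl hx, hx ▸ hvB⟩
        · exact ⟨Or.inr ⟨hxa, hxA⟩, hxB⟩
    have hvnot : v ∉ (A \ B).erase a :=
      fun h => hj (Finset.mem_sdiff.mp (Finset.mem_of_mem_erase h)).1
    have hcard : (A' \ B).card = (A \ B).card := by
      rw [hsd, Finset.card_insert_of_notMem hvnot, Finset.card_erase_of_mem hcABpos]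
      omega
    -- bound the new minimal distance
    have hvsup : v ∈ w.support :=
      SimpleGraph.Walk.mem_support_iff_exists_getVert.mpr ⟨j, rfl, hjle⟩
    have hlensum : (w.takeUntil v hvsup).length + (w.dropUntil v hvsup).length = w.length := by
      have := congrArg SimpleGraph.Walk.length (w.take_spec hvsup)
      rwa [SimpleGraph.Walk.length_append] at this
    have htake1 : 1 ≤ (w.takeUntil v hvsup).length := by
      rcases Nat.eq_zero_or_pos (w.takeUntil v hvsup).length with h | h
      · exact absurd (SimpleGraph.Walk.eq_of_length_eq_zero h) hva.symm
      · omega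
    have hdistvt : G.dist v t ≤ minD G A B - 1 := by
      have h1 : G.dist v t ≤ (w.dropUntil v hvsup).length := SimpleGraph.dist_le _
      omega
    have hcompv : G.connectedComponentMk v = G.connectedComponentMk t := by
      have h1 : G.connectedComponentMk a = G.connectedComponentMk v :=
        ConnectedComponent.sound ⟨w.takeUntil v hvsup⟩
      exact h1.symm.trans hcomp
    have htA' : t ∉ A' := by
      intro h
      rcases Finset.mem_insert.mp h with h | h
      · exact hvB (h ▸ htB)
      · exact htA (Finset.mem_of_mem_erase h)
    have hminD' : minD G A' B ≤ minD G A B - 1 :=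
      le_trans (minD_le (Finset.mem_insert_self _ _) hvB htB htA' hcompv) hdistvt
    have hdpos : 1 ≤ minD G A B := by omega
    have hΦ' : (A' \ B).card * N + minD G A' B < n := by
      rw [hcard]; omega
    exact hstep.trans (ih _ hΦ' A' B hcntA' le_rfl)

lemma lift_step [DecidableEq V] {G : SimpleGraph V} {m : ℕ} {B C : Finset V}
    (h : FMove G B C) (f : Fin m → V) (hf : Function.Injective f)
    (hfB : Finset.univ.image f = B) :
    ∃ g : Fin m → V, Function.Injective g ∧ Finset.univ.image g = C ∧ PebbleMove G f g := by
  obtain ⟨u, v, hu, hv, hadj, rfl⟩ := h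
  have : u ∈ Finset.univ.image f := hfB ▸ hu
  obtain ⟨i, -, hi⟩ := Finset.mem_image.mp this
  set g : Fin m → V := Function.update f i v with hg
  have hgi : g i = v := Function.update_self i v f
  have hgne : ∀ j, j ≠ i → g j = f j := fun j hj => Function.update_of_ne hj v f
  have hrange : ∀ j, f j ∈ B := fun j => hfB ▸ Finset.mem_image_of_mem f (Finset.mem_univ j)
  have hginj : Function.Injective g := by
    intro j k hjk
    by_cases hji : j = i
    · by_cases hki : k = i
      · rw [hji, hki]
      · exfalso
        rw [hji, hgi, hgne k hki] at hjk
        exact hv (hjk ▸ hrange k)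
    · by_cases hki : k = i
      · exfalso
        rw [hki, hgi, hgne j hji] at hjk
        exact hv (hjk.symm ▸ hrange j)
      · rw [hgne j hji, hgne k hki] at hjk
        exact hf hjk
  refine ⟨g, hginj, ?_, hf, hginj, i, ?_, fun j hj => (hgne j hj).symm⟩
  · ext x
    simp only [Finset.mem_image, Finset.mem_univ, true_and, Finset.mem_insert, Finset.mem_erase]
    constructor
    · rintro ⟨j, rfl⟩
      by_cases hji : j = i
      · rw [hji, hgi]; exact Or.inl rfl
      · rw [hgne j hji]
        refine Or.inr ⟨fun hcon => hji (hf (hcon.trans hi.symm)), hrange j⟩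
    · rintro (rfl | ⟨hxu, hxB⟩)
      · exact ⟨i, hgi⟩
      · obtain ⟨j, -, rfl⟩ := Finset.mem_image.mp (hfB.symm ▸ hxB)
        have hji : j ≠ i := fun hcon => hxu (hcon ▸ hi ▸ rfl)
        exact ⟨j, hgne j hji⟩
  · rw [hi, hgi]; exact hadj

lemma lift_path [DecidableEq V] {G : SimpleGraph V} {m : ℕ} :
    ∀ {A B : Finset V}, Relation.ReflTransGen (FMove G) A B →
      ∀ f : Fin m → V, Function.Injective f → Finset.univ.image f = A →
      ∃ g : Fin m → V, Function.Injective g ∧ Finset.univ.image g = B ∧ PebblePath G f g := by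
  intro A B h
  induction h with
  | refl => exact fun f hf hA => ⟨f, hf, hA, Relation.ReflTransGen.refl⟩
  | tail _ hmv ih =>
    intro f hf hA
    obtain ⟨g, hg, hgB, hpath⟩ := ih f hf hA
    obtain ⟨g', h1, h2, h3⟩ := lift_step hmv g hg hgB
    exact ⟨g', h1, h2, Relation.ReflTransGen.tail hpath h3⟩

lemma cnt_image [DecidableEq V] {G : SimpleGraph V} {m : ℕ} (f : Fin m → V)
    (hf : Function.Injective f) (K : G.ConnectedComponent) :
    cnt G (Finset.univ.image f) K = Nat.card {i : Fin m // G.connectedComponentMk (f i) = K} := by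
  classical
  unfold cnt
  rw [Finset.filter_image, Finset.card_image_of_injective _ hf,
    Nat.card_eq_fintype_card, Fintype.card_subtype]

end UnlabeledPebble

/-- Solvability of the unlabeled pebble motion problem: there is a permutation `σ`
and a pebble path from `S` to `T ∘ σ` if and only if `S ≡ T`. -/
theorem pebblePath_iff_sameSignature {V : Type*} [Fintype V] (G : SimpleGraph V) {m : ℕ}
    (S T : Fin m → V) (hS : Function.Injective S) (hT : Function.Injective T) :
    (∃ σ : Equiv.Perm (Fin m), PebblePath G S (T ∘ σ)) ↔ SameSignature G S T := by
  classical
  constructor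
  · rintro ⟨σ, hpath⟩
    have key : ∀ {P Q : Fin m → V}, PebbleMove G P Q →
        ∀ i, G.connectedComponentMk (P i) = G.connectedComponentMk (Q i) := by
      rintro P Q ⟨-, -, i0, hadj, hrest⟩ i
      by_cases hi : i = i0
      · exact hi ▸ SimpleGraph.ConnectedComponent.sound hadj.reachable
      · rw [hrest i hi]
    have hsig : ∀ Q : Fin m → V, Relation.ReflTransGen (PebbleMove G) S Q →
        SameSignature G S Q := by
      intro Q h
      induction h with
      | refl => intro K; rfl
      | tail _ hmv ih =>
        intro K
        refine (ih K).trans (Nat.card_congr (Equiv.subtypeEquivRight fun i => ?_))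
        rw [key hmv i]
    intro K
    exact ((hsig _ hpath) K).trans (Nat.card_congr (Equiv.subtypeEquiv σ fun i => Iff.rfl))
  · intro hsig
    set A : Finset V := Finset.univ.image S with hA
    set B : Finset V := Finset.univ.image T with hB
    have hcnt : ∀ K, UnlabeledPebble.cnt G A K = UnlabeledPebble.cnt G B K := fun K =>
      (UnlabeledPebble.cnt_image S hS K).trans
        ((hsig K).trans (UnlabeledPebble.cnt_image T hT K).symm)
    have hr : Relation.ReflTransGen (UnlabeledPebble.FMove G) A B :=
      UnlabeledPebble.reach _ A B hcnt le_rfl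
    obtain ⟨g, hg, hgB, hpath⟩ := UnlabeledPebble.lift_path hr S hS rfl
    have hex : ∀ i, ∃ j, T j = g i := by
      intro i
      have : g i ∈ Finset.univ.image T := by
        rw [← hB, ← hgB]
        exact Finset.mem_image_of_mem g (Finset.mem_univ i)
      obtain ⟨j, -, hj⟩ := Finset.mem_image.mp this
      exact ⟨j, hj⟩
    choose φ hφ using hex
    have hφinj : Function.Injective φ := by
      intro i k hik
      apply hg
      rw [← hφ i, ← hφ k, hik]
    have hφbij : Function.Bijective φ := Finite.injective_iff_bijective.mp hφinj
    refine ⟨Equiv.ofBijective φ hφbij, ?_⟩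
    have hTg : T ∘ (Equiv.ofBijective φ hφbij) = g := funext fun i => hφ i
    rw [hTg]
    exact hpath
end

section
/- Let G = (V,E) be a finite connected undirected graph and let S and T be any two placements of m pebbles on G. Then there exists a permutation σ of Fin m and a pebble path from S to T ∘ σ. -/
/-!
Only the set of occupied vertices matters: once a pebble path reaches a placement with the same
range as `T`, the two placements differ by a permutation of the pebbles. The occupied set can be
changed one vertex at a time: for an occupied `a` and a free `b`, push the pebbles along a walk
from `a` to `b`, each pebble sliding into the next free vertex ahead of it; only the occupancy of
`a` and `b` changes. Repeating this for `a ∈ range S \ range T` and `b ∈ range T \ range S`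
shrinks `range S \ range T` until it is empty, and then the two ranges, having the same
cardinality, coincide.
-/

open Function Set

theorem Function.Injective.range_eq_of_range_subset {α β : Type*} [Finite α] {f g : α → β}
    (hf : Injective f) (hg : Injective g) (h : range f ⊆ range g) : range f = range g :=
  eq_of_subset_of_ncard_le h (by rw [ncard_range_of_injective hf, ncard_range_of_injective hg])
    (toFinite _)

namespace PebblePath

variable {V ι : Type*} {G : SimpleGraph V}

theorem injective {S T : ι → V} (h : PebblePath G S T) (hS : Injective S) : Injective T := by
  induction h with
  | refl => exact hS
  | tail _ hmove _ => exact hmove.2.1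

theorem exists_range_eq_of_adj {S : ι → V} (hS : Injective S) {a c : V} (hac : G.Adj a c)
    (ha : a ∈ range S) (hc : c ∉ range S) :
    ∃ S', PebblePath G S S' ∧ range S' = insert c (range S \ {a}) := by
  classical
  obtain ⟨i, rfl⟩ := ha
  have hinj : Injective (update S i c) := by
    intro j k hjk
    by_cases hj : j = i <;> by_cases hk : k = i <;>
      simp_all [update_of_ne, hS.eq_iff]
  refine ⟨update S i c, .single ⟨hS, hinj, i, by simpa using hac,
    fun j hj => (update_of_ne hj _ _).symm⟩, ?_⟩
  ext x
  constructor
  · rintro ⟨j, rfl⟩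
    by_cases hj : j = i <;> simp_all [update_of_ne, hS.eq_iff]
  · rintro (rfl | ⟨⟨j, rfl⟩, hji⟩)
    · exact ⟨i, update_self ..⟩
    · exact ⟨j, update_of_ne (by rintro rfl; exact hji rfl) ..⟩

theorem exists_range_eq_of_walk {S : ι → V} (hS : Injective S) {a b : V} (p : G.Walk a b)
    (ha : a ∈ range S) (hb : b ∉ range S) :
    ∃ S', PebblePath G S S' ∧ range S' = insert b (range S \ {a}) := by
  induction p generalizing S with
  | nil => exact absurd ha hb
  | @cons a c b hac q ih =>
    by_cases hc : c ∈ range S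
    · obtain ⟨S₁, hpath₁, hrange₁⟩ := ih hS hc hb
      obtain ⟨S₂, hpath₂, hrange₂⟩ := exists_range_eq_of_adj (hpath₁.injective hS) hac
        (by rw [hrange₁]; aesop) (by rw [hrange₁]; aesop)
      refine ⟨S₂, hpath₁.trans hpath₂, ?_⟩
      rw [hrange₂, hrange₁]
      ext x
      by_cases hxa : x = a <;> by_cases hxc : x = c <;> aesop
    · obtain ⟨S₁, hpath₁, hrange₁⟩ := exists_range_eq_of_adj hS hac ha hc
      by_cases hcb : c = b
      · subst hcb
        exact ⟨S₁, hpath₁, hrange₁⟩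
      obtain ⟨S₂, hpath₂, hrange₂⟩ := ih (hpath₁.injective hS) (by simp [hrange₁])
        (by rw [hrange₁]; aesop)
      refine ⟨S₂, hpath₁.trans hpath₂, ?_⟩
      rw [hrange₂, hrange₁]
      ext x
      by_cases hxc : x = c <;> aesop

theorem exists_range_eq [Finite ι] (hG : G.Preconnected) {S T : ι → V} (hS : Injective S)
    (hT : Injective T) : ∃ S', PebblePath G S S' ∧ range S' = range T := by
  obtain ⟨n, hn⟩ : ∃ n, (range S \ range T).ncard = n := ⟨_, rfl⟩
  induction n generalizing S with
  | zero =>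
    have hsub : range S ⊆ range T := sdiff_eq_empty.mp ((ncard_eq_zero (toFinite _)).mp hn)
    exact ⟨S, .refl, hS.range_eq_of_range_subset hT hsub⟩
  | succ n ih =>
    obtain ⟨a, ha⟩ := nonempty_of_ncard_ne_zero (s := range S \ range T) (by omega)
    obtain ⟨b, hbT, hbS⟩ : (range T \ range S).Nonempty := by
      rw [nonempty_iff_ne_empty, Ne, sdiff_eq_empty]
      intro hsub
      exact ha.2 (hT.range_eq_of_range_subset hS hsub ▸ ha.1)
    obtain ⟨p⟩ := hG a b
    obtain ⟨S₁, hpath₁, hrange₁⟩ := exists_range_eq_of_walk hS p ha.1 hbS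
    have hn₁ : (range S₁ \ range T).ncard = n := by
      have : range S₁ \ range T = (range S \ range T) \ {a} := by
        rw [hrange₁]; ext x; by_cases hxb : x = b <;> aesop
      rw [this, ncard_sdiff_singleton_of_mem ha, hn, Nat.add_sub_cancel]
    obtain ⟨S₂, hpath₂, hrange₂⟩ := ih (hpath₁.injective hS) hn₁
    exact ⟨S₂, hpath₁.trans hpath₂, hrange₂⟩

end PebblePath

theorem Function.Injective.exists_perm_comp_eq_of_range_eq {α β : Type*} {f g : α → β}
    (hf : Injective f) (hg : Injective g) (h : range f = range g) :
    ∃ σ : Equiv.Perm α, g ∘ σ = f :=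
  ⟨(Equiv.ofInjective f hf).trans ((Equiv.setCongr h).trans (Equiv.ofInjective g hg).symm),
    funext fun i => by simp [Equiv.apply_ofInjective_symm]⟩

theorem pebblePath_of_connected_general {V : Type*} (G : SimpleGraph V)
    (hG : G.Connected) {m : ℕ} (S T : Fin m → V)
    (hS : Function.Injective S) (hT : Function.Injective T) :
    ∃ σ : Equiv.Perm (Fin m), PebblePath G S (T ∘ σ) := by
  obtain ⟨S', hpath, hrange⟩ := PebblePath.exists_range_eq hG.preconnected hS hT
  obtain ⟨σ, hσ⟩ := (hpath.injective hS).exists_perm_comp_eq_of_range_eq hT hrange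
  exact ⟨σ, hσ.symm ▸ hpath⟩

/-- On a finite connected graph, any two placements of `m` pebbles are connected
by a pebble path, up to a permutation of the pebbles. -/
theorem pebblePath_of_connected {V : Type*} [Fintype V] (G : SimpleGraph V)
    (hG : G.Connected) {m : ℕ} (S T : Fin m → V)
    (hS : Function.Injective S) (hT : Function.Injective T) :
    ∃ σ : Equiv.Perm (Fin m), PebblePath G S (T ∘ σ) :=
  pebblePath_of_connected_general G hG S T hS hT
end

section
/- Let X be a topological space, col : X → X → Prop a symmetric relation, V ⊆ X a finite pumped configuration, and G = (V,E) a pebble graph on V with edge paths p_{v,v'} satisfying the edge-planner guarantee. Let C, C' : Fin m → V be two configurations of V with C ≡ C' (equal signatures with respect to the connected components of G). Then there exists a permutation σ of Fin m and a multi-robot path for m robots from C to C' ∘ σ, i.e., a continuous map f : [0,1] → (Fin m → X) with f 0 = C, f 1 = C' ∘ σ, and ¬ col (f t i) (f t j) for every t ∈ [0,1] and all i ≠ j. -/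
/-- A multi-robot path for `m` robots from `A` to `B`: a continuous map
`f : [0,1] → (Fin m → X)` with `f 0 = A`, `f 1 = B`, such that at every time `t`
no two distinct robots collide. -/
def MultiRobotPath {X : Type*} [TopologicalSpace X] (col : X → X → Prop) {m : ℕ}
    (A B : Fin m → X) : Prop :=
  ∃ f : unitInterval → (Fin m → X), Continuous f ∧ f 0 = A ∧ f 1 = B ∧
    ∀ t : unitInterval, ∀ i j : Fin m, i ≠ j → ¬ col (f t i) (f t j)

/-- A pumped configuration: a finite set of single-robot configurations, any two
distinct members of which are non-colliding. -/
def IsPumped {X : Type*} (col : X → X → Prop) (V : Set X) : Prop :=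
  V.Finite ∧ ∀ v ∈ V, ∀ v' ∈ V, v ≠ v' → ¬ col v v'

section PebbleAux

open Finset Relation

attribute [local instance] Classical.propDecidable


variable {W : Type*} {G : SimpleGraph W}

/-- One pebble move: slide a pebble from `v` along an edge to an empty vertex `v'`. -/
def PebMove (G : SimpleGraph W) (s t : Finset W) : Prop :=
  ∃ v v', G.Adj v v' ∧ v ∈ s ∧ v' ∉ s ∧ t = insert v' (s.erase v)

/-- Number of pebbles of `s` in the component of `x`. -/
noncomputable def pebCnt (G : SimpleGraph W) (s : Finset W) (x : W) : ℕ :=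
  (s.filter fun y => G.Reachable x y).card

lemma pebMove_walk {v w : W} (q : G.Walk v w) :
    ∀ s : Finset W, v ∈ s → w ∉ s →
      ReflTransGen (PebMove G) s (insert w (s.erase v)) := by
  induction q with
  | nil => intro s hv hw; exact absurd hv hw
  | @cons a x w h q ih =>
    intro s ha hw
    by_cases hx : x ∈ s
    · have ih' := ih s hx hw
      have hxw : x ≠ w := fun e => hw (e ▸ hx)
      have haw : a ≠ w := fun e => hw (e ▸ ha)
      have hmove : PebMove G (insert w (s.erase x)) (insert x ((insert w (s.erase x)).erase a)) := by
        refine ⟨a, x, h, ?_, ?_, rfl⟩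
        · simp [Finset.mem_insert, Finset.mem_erase, haw, h.ne, ha]
        · simp [Finset.mem_insert, Finset.mem_erase, hxw]
      have hset : insert x ((insert w (s.erase x)).erase a) = insert w (s.erase a) := by
        have hax : a ≠ x := h.ne
        ext y
        by_cases h1 : y = x <;> by_cases h2 : y = w <;> by_cases h3 : y = a <;>
          simp_all [Finset.mem_insert, Finset.mem_erase]
      exact ih'.tail (hset ▸ hmove)
    · have m1 : PebMove G s (insert x (s.erase a)) := ⟨a, x, h, ha, hx, rfl⟩
      by_cases hxw : x = w
      · subst hxw; exact ReflTransGen.single m1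
      · have hxs : x ∈ insert x (s.erase a) := Finset.mem_insert_self _ _
        have hws : w ∉ insert x (s.erase a) := by
          simp [Finset.mem_insert, Finset.mem_erase, Ne.symm hxw, hw]
        have ih' := ih (insert x (s.erase a)) hxs hws
        have hset : insert w ((insert x (s.erase a)).erase x) = insert w (s.erase a) := by
          rw [Finset.erase_insert (by simp [Finset.mem_erase, hx])]
        exact (ReflTransGen.single m1).trans (hset ▸ ih')

lemma pebCnt_move {v w : W} (hr : G.Reachable v w) (s : Finset W)
    (hv : v ∈ s) (hw : w ∉ s) (x : W) :
    pebCnt G (insert w (s.erase v)) x = pebCnt G s x := by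
  unfold pebCnt
  by_cases hxv : G.Reachable x v
  · have hxw : G.Reachable x w := hxv.trans hr
    rw [Finset.filter_insert, if_pos hxw, Finset.filter_erase]
    rw [Finset.card_insert_of_notMem (by simp [hw]),
      Finset.card_erase_of_mem (by simp [hv, hxv])]
    have : v ∈ s.filter fun y => G.Reachable x y := by simp [hv, hxv]
    have hpos : 0 < (s.filter fun y => G.Reachable x y).card := Finset.card_pos.2 ⟨v, this⟩
    omega
  · have hxw : ¬ G.Reachable x w := fun hxw => hxv (hxw.trans hr.symm)
    rw [Finset.filter_insert, if_neg hxw, Finset.filter_erase,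
      Finset.erase_eq_of_notMem (by simp [hxv])]

lemma pebReach : ∀ (n : ℕ) (s t : Finset W), (s \ t).card = n →
    (∀ x, pebCnt G s x = pebCnt G t x) → ReflTransGen (PebMove G) s t := by
  intro n
  induction n using Nat.strong_induction_on with
  | _ n ih =>
    intro s t hcard hcnt
    by_cases hst : s \ t = ∅
    · have hsub : s ⊆ t := Finset.sdiff_eq_empty_iff_subset.mp hst
      have : t ⊆ s := by
        intro x hx
        have hfeq : s.filter (fun y => G.Reachable x y) = t.filter (fun y => G.Reachable x y) :=
          Finset.eq_of_subset_of_card_le (Finset.filter_subset_filter _ hsub) (hcnt x).ge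
        have : x ∈ t.filter fun y => G.Reachable x y := by
          simp only [Finset.mem_filter]; exact ⟨hx, SimpleGraph.Reachable.refl x⟩
        rw [← hfeq] at this
        exact (Finset.mem_filter.mp this).1
      rw [Finset.Subset.antisymm hsub this]
    · obtain ⟨v, hv⟩ := Finset.nonempty_iff_ne_empty.mpr hst
      rw [Finset.mem_sdiff] at hv
      obtain ⟨w, hwt, hws, hreach⟩ : ∃ w, w ∈ t ∧ w ∉ s ∧ G.Reachable v w := by
        by_contra hno
        push_neg at hno
        have hsub : t.filter (fun y => G.Reachable v y) ⊆ s.filter (fun y => G.Reachable v y) := by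
          intro y hy
          rw [Finset.mem_filter] at hy ⊢
          refine ⟨?_, hy.2⟩
          by_contra hys
          exact hno y hy.1 hys hy.2
        have hfeq : t.filter (fun y => G.Reachable v y) = s.filter (fun y => G.Reachable v y) :=
          Finset.eq_of_subset_of_card_le hsub (hcnt v).le
        have : v ∈ s.filter fun y => G.Reachable v y := by
          simp only [Finset.mem_filter]; exact ⟨hv.1, SimpleGraph.Reachable.refl v⟩
        rw [← hfeq] at this
        exact hv.2 (Finset.mem_filter.mp this).1
      obtain ⟨q⟩ := hreach
      have chain1 := pebMove_walk q s hv.1 hws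
      set s' := insert w (s.erase v) with hs'
      have hcnt' : ∀ x, pebCnt G s' x = pebCnt G t x := fun x =>
        (pebCnt_move ⟨q⟩ s hv.1 hws x).trans (hcnt x)
      have hdiff : s' \ t = (s \ t).erase v := by
        rw [hs']
        ext y
        simp only [Finset.mem_sdiff, Finset.mem_insert, Finset.mem_erase]
        constructor
        · rintro ⟨h1 | ⟨h2, h3⟩, h4⟩
          · exact absurd hwt (h1 ▸ h4)
          · exact ⟨h2, h3, h4⟩
        · rintro ⟨h1, h2, h3⟩
          exact ⟨Or.inr ⟨h1, h2⟩, h3⟩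
      have hvd : v ∈ s \ t := Finset.mem_sdiff.mpr hv
      have hn : (s' \ t).card = n - 1 := by
        rw [hdiff, Finset.card_erase_of_mem hvd, hcard]
      have hnpos : 0 < n := by
        rw [← hcard]; exact Finset.card_pos.2 ⟨v, hvd⟩
      exact chain1.trans (ih (n - 1) (by omega) s' t hn hcnt')


section Topo

variable {X : Type*} [TopologicalSpace X] {col : X → X → Prop} {V : Set X}
  {G : SimpleGraph V} {m : ℕ}

/-- The collision-free configuration space. -/
def FreeSet (col : X → X → Prop) (m : ℕ) : Set (Fin m → X) :=
  {g | ∀ i j : Fin m, i ≠ j → ¬ col (g i) (g j)}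

lemma mkConf_mem (hV2 : ∀ v ∈ V, ∀ v' ∈ V, v ≠ v' → ¬ col v v')
    {c : Fin m → V} (hc : Function.Injective c) :
    (fun j => (c j : X)) ∈ FreeSet col m := by
  intro i j hij
  exact hV2 (c i) (c i).2 (c j) (c j).2 (fun e => hij (hc (Subtype.ext e)))

lemma upd_inj {α β : Type*} [DecidableEq α] {c : α → β} (hc : Function.Injective c)
    {i : α} {v' : β} (hv' : ∀ j, c j ≠ v') :
    Function.Injective (Function.update c i v') := by
  intro a b h
  rw [Function.update_apply, Function.update_apply] at h
  split_ifs at h with h1 h2 h2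
  · exact h1.trans h2.symm
  · exact absurd h.symm (hv' b)
  · exact absurd h (hv' a)
  · exact hc h

lemma image_upd {α β : Type*} [Fintype α] [DecidableEq α] [DecidableEq β]
    {c : α → β} (hc : Function.Injective c) (i : α) (v' : β) (hv' : ∀ j, c j ≠ v') :
    Finset.univ.image (Function.update c i v') = insert v' ((Finset.univ.image c).erase (c i)) := by
  ext y
  simp only [Finset.mem_image, Finset.mem_univ, true_and, Finset.mem_insert, Finset.mem_erase]
  constructor
  · rintro ⟨j, hj⟩
    rw [Function.update_apply] at hj
    split_ifs at hj with hji
    · exact Or.inl hj.symm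
    · exact Or.inr ⟨hj ▸ fun e => hji (hc e), j, hj⟩
  · rintro (rfl | ⟨hne, j, rfl⟩)
    · exact ⟨i, Function.update_self ..⟩
    · have hj : j ≠ i := fun e => hne (by rw [e])
      exact ⟨j, Function.update_of_ne hj _ _⟩

lemma joined_move (hsym : Symmetric col)
    (hV2 : ∀ v ∈ V, ∀ v' ∈ V, v ≠ v' → ¬ col v v')
    (p : ∀ v v' : V, G.Adj v v' → unitInterval → X)
    (hp : ∀ (v v' : V) (h : G.Adj v v'),
      Continuous (p v v' h) ∧ p v v' h 0 = (v : X) ∧ p v v' h 1 = (v' : X) ∧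
      ∀ t : unitInterval, ∀ u : V, u ≠ v → u ≠ v' → ¬ col (p v v' h t) (u : X))
    {c : Fin m → V} (hc : Function.Injective c) (i : Fin m) (v' : V)
    (hadj : G.Adj (c i) v') (hv' : ∀ j, c j ≠ v')
    (hx : (fun j => (c j : X)) ∈ FreeSet col m)
    (hy : (fun j => (Function.update c i v' j : X)) ∈ FreeSet col m) :
    Joined (⟨fun j => (c j : X), hx⟩ : FreeSet col m)
      ⟨fun j => (Function.update c i v' j : X), hy⟩ := by
  have hmem : ∀ t : unitInterval,
      (fun j => if j = i then p (c i) v' hadj t else (c j : X)) ∈ FreeSet col m := by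
    intro t a b hab
    by_cases ha : a = i <;> by_cases hb : b = i
    · exact absurd (ha.trans hb.symm) hab
    · subst ha
      simp only [if_pos rfl, if_neg hb]
      exact (hp _ _ hadj).2.2.2 t (c b) (fun e => hab (hc e).symm) (hv' b)
    · subst hb
      simp only [if_pos rfl, if_neg ha]
      intro hcol
      exact (hp _ _ hadj).2.2.2 t (c a) (fun e => hab (hc e)) (hv' a) (hsym hcol)
    · simp only [if_neg ha, if_neg hb]
      exact hV2 (c a) (c a).2 (c b) (c b).2 (fun e => hab (hc (Subtype.ext e)))
  refine ⟨{ toFun := fun t => ⟨fun j => if j = i then p (c i) v' hadj t else (c j : X), hmem t⟩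
            continuous_toFun := ?_
            source' := ?_
            target' := ?_ }⟩
  · refine Continuous.subtype_mk ?_ _
    refine continuous_pi fun j => ?_
    by_cases hj : j = i
    · simp only [if_pos hj]
      exact (hp _ _ hadj).1
    · simp only [if_neg hj]
      exact continuous_const
  · refine Subtype.ext (funext fun j => ?_)
    by_cases hj : j = i
    · subst hj; simp [(hp _ _ hadj).2.1]
    · simp only [if_neg hj]
  · refine Subtype.ext (funext fun j => ?_)
    by_cases hj : j = i
    · subst hj
      simp [(hp _ _ hadj).2.2.1, Function.update_self]
    · simp only [if_neg hj, Function.update_of_ne hj]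

lemma joined_of_chain (hsym : Symmetric col)
    (hV2 : ∀ v ∈ V, ∀ v' ∈ V, v ≠ v' → ¬ col v v')
    (p : ∀ v v' : V, G.Adj v v' → unitInterval → X)
    (hp : ∀ (v v' : V) (h : G.Adj v v'),
      Continuous (p v v' h) ∧ p v v' h 0 = (v : X) ∧ p v v' h 1 = (v' : X) ∧
      ∀ t : unitInterval, ∀ u : V, u ≠ v → u ≠ v' → ¬ col (p v v' h t) (u : X))
    {s t : Finset V} (hchain : ReflTransGen (PebMove G) s t) :
    ∀ c : Fin m → V, Function.Injective c → Finset.univ.image c = s →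
      ∃ d : Fin m → V, Function.Injective d ∧ Finset.univ.image d = t ∧
        ∀ (hx : (fun j => (c j : X)) ∈ FreeSet col m)
          (hy : (fun j => (d j : X)) ∈ FreeSet col m),
          Joined (⟨fun j => (c j : X), hx⟩ : FreeSet col m) ⟨fun j => (d j : X), hy⟩ := by
  induction hchain using Relation.ReflTransGen.head_induction_on with
  | refl =>
    intro c hc him
    exact ⟨c, hc, him, fun hx hy => Joined.refl _⟩
  | head hmv hrest ih =>
    intro c hc him
    obtain ⟨v, v', hadj, hvs, hv's, rfl⟩ := hmv
    obtain ⟨i, -, hci⟩ := Finset.mem_image.mp (him ▸ hvs)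
    have hadj' : G.Adj (c i) v' := hci ▸ hadj
    have hv'r : ∀ j, c j ≠ v' := by
      intro j e
      exact hv's (him ▸ Finset.mem_image.mpr ⟨j, Finset.mem_univ j, e⟩)
    have hc1 : Function.Injective (Function.update c i v') := upd_inj hc hv'r
    have him1 : Finset.univ.image (Function.update c i v') = insert v' ((Finset.univ.image c).erase v) := by
      rw [image_upd hc i v' hv'r, hci]
    rw [him] at him1
    obtain ⟨d, hd, hdim, hjoin⟩ := ih (Function.update c i v') hc1 (him1.trans (by congr!))
    refine ⟨d, hd, hdim, fun hx hy => ?_⟩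
    exact (joined_move hsym hV2 p hp hc i v' hadj' hv'r hx (mkConf_mem hV2 hc1)).trans
      (hjoin (mkConf_mem hV2 hc1) hy)

end Topo

end PebbleAux


/-- Within a single pebble graph whose edge paths satisfy the edge-planner
guarantee, any two equivalent configurations `C ≡ C'` are connected by a
multi-robot path, up to a permutation of the robots. -/
theorem multiRobotPath_of_sameSignature {X : Type*} [TopologicalSpace X]
    (col : X → X → Prop) (hsym : Symmetric col)
    (V : Set X) (hV : IsPumped col V)
    (G : SimpleGraph V) (p : ∀ v v' : V, G.Adj v v' → unitInterval → X)
    (hp : ∀ (v v' : V) (h : G.Adj v v'),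
      Continuous (p v v' h) ∧ p v v' h 0 = (v : X) ∧ p v v' h 1 = (v' : X) ∧
      ∀ t : unitInterval, ∀ u : V, u ≠ v → u ≠ v' → ¬ col (p v v' h t) (u : X))
    {m : ℕ} (C C' : Fin m → V)
    (hC : Function.Injective C) (hC' : Function.Injective C')
    (hsig : SameSignature G C C') :
    ∃ σ : Equiv.Perm (Fin m),
      MultiRobotPath col (fun i => (C i : X)) (fun i => (C' (σ i) : X)) := by
  classical
  obtain ⟨hV1, hV2⟩ := hV
  have key : ∀ (D : Fin m → V), Function.Injective D → ∀ x : V,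
      Nat.card {i : Fin m // G.connectedComponentMk (D i) = G.connectedComponentMk x}
        = pebCnt G (Finset.univ.image D) x := by
    intro D hD x
    have e1 : Nat.card {i : Fin m // G.connectedComponentMk (D i) = G.connectedComponentMk x}
        = Nat.card {i : Fin m // G.Reachable x (D i)} :=
      Nat.card_congr (Equiv.subtypeEquivRight fun i => by
        rw [SimpleGraph.ConnectedComponent.eq]
        exact ⟨fun h => h.symm, fun h => h.symm⟩)
    rw [e1, Nat.card_eq_fintype_card, Fintype.card_subtype]
    unfold pebCnt
    rw [Finset.filter_image, Finset.card_image_of_injective _ hD]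
    try congr!
  have hcnt : ∀ x : V, pebCnt G (Finset.univ.image C) x = pebCnt G (Finset.univ.image C') x := by
    intro x
    rw [← key C hC x, ← key C' hC' x]
    exact hsig _
  have hchain := pebReach (G := G) _ (Finset.univ.image C) (Finset.univ.image C') rfl hcnt
  obtain ⟨d, hd, hdim, hjoin⟩ := joined_of_chain hsym hV2 p hp hchain C hC rfl
  have hex : ∀ i, ∃ j, C' j = d i := by
    intro i
    have : d i ∈ Finset.univ.image C' := by
      rw [← hdim]
      exact Finset.mem_image_of_mem d (Finset.mem_univ i)
    obtain ⟨j, -, hj⟩ := Finset.mem_image.mp this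
    exact ⟨j, hj⟩
  choose σ0 hσ0 using hex
  have hσinj : Function.Injective σ0 := fun a b h => hd (by rw [← hσ0, ← hσ0, h])
  refine ⟨Equiv.ofBijective σ0 (Finite.injective_iff_bijective.mp hσinj), ?_⟩
  have hCσ : (fun i => (C' (Equiv.ofBijective σ0
      (Finite.injective_iff_bijective.mp hσinj) i) : X)) = fun j => (d j : X) :=
    funext fun i => by
      show ((C' (σ0 i) : X)) = _
      rw [hσ0]
  rw [hCσ]
  obtain ⟨γ⟩ := hjoin (mkConf_mem hV2 hC) (mkConf_mem hV2 hd)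
  exact ⟨fun t => (γ t : Fin m → X), continuous_subtype_val.comp γ.continuous,
    congrArg Subtype.val γ.source, congrArg Subtype.val γ.target,
    fun t i j hij => (γ t).2 i j hij⟩
end

section
/- Let X_1, …, X_k be topological spaces with symmetric collision relations col_{ij} : X_i → X_j → Prop satisfying col_{ij} x y ↔ col_{ji} y x. Let 𝕍 = (V_1, …, V_k) be a composite pumped configuration with composite pebble graph 𝔾 = (G_1, …, G_k) whose edge paths satisfy the composite edge-planner guarantee. Let ℂ = (C_1, …, C_k) and ℂ' = (C'_1, …, C'_k) be composite configurations of 𝕍 with ℂ ≡ ℂ', i.e., C_i ≡ C'_i with respect to G_i for every i. Then there exist permutations σ_i of Fin m_i and continuous maps f_i : [0,1] → (Fin m_i → X_i) with f_i 0 = C_i and f_i 1 = C'_i ∘ σ_i such that for every t ∈ [0,1]: for each i and all a ≠ b, ¬ col_{ii} (f_i t a) (f_i t b), and for all i ≠ j and all a, b, ¬ col_{ij} (f_i t a) (f_j t b). -/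
attribute [local instance] Classical.propDecidable

namespace TokenAux

noncomputable def cnt {W : Type*} (H : SimpleGraph W) (A : Finset W) (K : H.ConnectedComponent) : ℕ :=
  (A.filter fun v => H.connectedComponentMk v = K).card



variable {W : Type*} {H : SimpleGraph W} {R : Finset W → Finset W → Prop}


lemma L1 (hstep : ∀ A v v' A'', v ∈ A → v' ∉ A → H.Adj v v' →
      (∀ x, x ∈ A'' ↔ x = v' ∨ x ∈ A ∧ x ≠ v) → R A A'')
    (htrans : ∀ {A B C}, R A B → R B C → R A C) :
    ∀ {w' w : W} (q : H.Walk w' w) (A : Finset W), w' ∉ A → w ∈ A →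
      ∃ u ∈ A, (∃ r : H.Walk u w, r.length < q.length) ∧ R A (insert w' (A.erase u)) := by
  intro w' w q
  induction q with
  | nil => intro A hw' hw; exact absurd hw hw'
  | @cons w' x w h q' ih =>
    intro A hw' hw
    by_cases hx : x ∈ A
    · exact ⟨x, hx, ⟨q', by simp [SimpleGraph.Walk.length_cons]⟩,
        hstep A x w' _ hx hw' h.symm
          (fun y => by simp only [Finset.mem_insert, Finset.mem_erase]; tauto)⟩
    · obtain ⟨u, hu, ⟨r, hr⟩, hR⟩ := ih A hx hw
      refine ⟨u, hu, ⟨r, by simp [SimpleGraph.Walk.length_cons]; omega⟩, ?_⟩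
      have hx' : x ∈ insert x (A.erase u) := Finset.mem_insert_self _ _
      have hw'' : w' ∉ insert x (A.erase u) := by
        simp only [Finset.mem_insert, Finset.mem_erase]
        push_neg
        exact ⟨h.ne, fun _ => hw'⟩
      have hch : ∀ y, y ∈ insert w' (A.erase u) ↔
          y = w' ∨ y ∈ insert x (A.erase u) ∧ y ≠ x := by
        intro y
        simp only [Finset.mem_insert, Finset.mem_erase]
        constructor
        · rintro (rfl | ⟨hyu, hyA⟩)
          · exact Or.inl rfl
          · exact Or.inr ⟨Or.inr ⟨hyu, hyA⟩, fun h => hx (h ▸ hyA)⟩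
        · rintro (rfl | ⟨(rfl | ⟨hyu, hyA⟩), hyx⟩)
          · exact Or.inl rfl
          · exact absurd rfl hyx
          · exact Or.inr ⟨hyu, hyA⟩
      exact htrans hR (hstep _ x w' _ hx' hw'' h.symm hch)

lemma cnt_move {A : Finset W} {u w' : W} (hu : u ∈ A) (hw' : w' ∉ A)
    (hcomp : H.connectedComponentMk u = H.connectedComponentMk w') (K : H.ConnectedComponent) :
    cnt H (insert w' (A.erase u)) K = cnt H A K := by
  unfold cnt
  rw [Finset.filter_insert, Finset.filter_erase]
  by_cases hK : H.connectedComponentMk w' = K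
  · rw [if_pos hK]
    have huK : u ∈ A.filter fun v => H.connectedComponentMk v = K :=
      Finset.mem_filter.2 ⟨hu, hcomp.trans hK⟩
    rw [Finset.card_insert_of_notMem
        (by simp only [Finset.mem_erase, Finset.mem_filter]; tauto),
      Finset.card_erase_of_mem huK]
    have : 0 < (A.filter fun v => H.connectedComponentMk v = K).card := Finset.card_pos.2 ⟨u, huK⟩
    omega
  · rw [if_neg hK, Finset.erase_eq_of_notMem (by simp [hcomp.trans]; tauto)]

lemma strictStep (hstep : ∀ A v v' A'', v ∈ A → v' ∉ A → H.Adj v v' →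
      (∀ x, x ∈ A'' ↔ x = v' ∨ x ∈ A ∧ x ≠ v) → R A A'')
    (htrans : ∀ {A B C}, R A B → R B C → R A C) (B : Finset W) :
    ∀ (n : ℕ) (A : Finset W) (w' w : W) (q : H.Walk w' w), q.length ≤ n →
      w' ∈ B → w' ∉ A → w ∈ A → w ∉ B →
      ∃ A', R A A' ∧ (∀ K, cnt H A' K = cnt H A K) ∧ (B \ A').card < (B \ A).card := by
  intro n
  induction n with
  | zero =>
    intro A w' w q hq hw'B hw'A hwA hwB
    obtain ⟨u, hu, ⟨r, hr⟩, _⟩ := L1 hstep htrans q A hw'A hwA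
    omega
  | succ n ih =>
    intro A w' w q hq hw'B hw'A hwA hwB
    obtain ⟨u, hu, ⟨r, hr⟩, hR⟩ := L1 hstep htrans q A hw'A hwA
    have hcomp : H.connectedComponentMk u = H.connectedComponentMk w' := by
      rw [SimpleGraph.ConnectedComponent.eq]
      have h1 : H.Reachable u w := ⟨r⟩
      have h2 : H.Reachable w w' := ⟨q.reverse⟩
      exact h1.trans h2
    set A₁ := insert w' (A.erase u) with hA₁
    have hcnt : ∀ K, cnt H A₁ K = cnt H A K := fun K => cnt_move hu hw'A hcomp K
    have huw' : u ≠ w' := fun h => hw'A (h ▸ hu)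
    by_cases huB : u ∈ B
    · -- recurse: new mismatch pair (u, w)
      have hBA₁ : B \ A₁ = insert u ((B \ A).erase w') := by
        ext x
        simp only [hA₁, Finset.mem_sdiff, Finset.mem_insert, Finset.mem_erase]
        by_cases hxu : x = u
        · subst hxu; simp [huw', huB, hu, hw'A]
        · by_cases hxw : x = w'
          · subst hxw; simp [hxu, hw'B]
          · simp only [hxu, hxw]; tauto
      have hcard₁ : (B \ A₁).card = (B \ A).card := by
        rw [hBA₁, Finset.card_insert_of_notMem (by simp [Finset.mem_erase, Finset.mem_sdiff]; tauto),
          Finset.card_erase_of_mem (Finset.mem_sdiff.2 ⟨hw'B, hw'A⟩)]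
        have : 0 < (B \ A).card := Finset.card_pos.2 ⟨w', Finset.mem_sdiff.2 ⟨hw'B, hw'A⟩⟩
        omega
      have huA₁ : u ∉ A₁ := by simp [hA₁, Finset.mem_erase, huw']
      have hwA₁ : w ∈ A₁ := by
        simp only [hA₁, Finset.mem_insert, Finset.mem_erase]
        exact Or.inr ⟨fun h => hwB (h ▸ huB), hwA⟩
      obtain ⟨A'', hR', hcnt', hcard'⟩ := ih A₁ u w r (by omega) huB huA₁ hwA₁ hwB
      exact ⟨A'', htrans hR hR', fun K => (hcnt' K).trans (hcnt K), by omega⟩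
    · refine ⟨A₁, hR, hcnt, ?_⟩
      have hBA₁ : B \ A₁ = (B \ A).erase w' := by
        ext x
        simp only [hA₁, Finset.mem_sdiff, Finset.mem_insert, Finset.mem_erase]
        by_cases hxu : x = u
        · subst hxu; simp [huB, huw', hu]
        · by_cases hxw : x = w'
          · subst hxw; simp
          · simp only [hxu, hxw]; tauto
      rw [hBA₁, Finset.card_erase_of_mem (Finset.mem_sdiff.2 ⟨hw'B, hw'A⟩)]
      have : 0 < (B \ A).card := Finset.card_pos.2 ⟨w', Finset.mem_sdiff.2 ⟨hw'B, hw'A⟩⟩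
      omega

lemma token_reach (hrefl : ∀ A, R A A)
    (htrans : ∀ {A B C}, R A B → R B C → R A C)
    (hstep : ∀ A v v' A'', v ∈ A → v' ∉ A → H.Adj v v' →
      (∀ x, x ∈ A'' ↔ x = v' ∨ x ∈ A ∧ x ≠ v) → R A A'')
    (A B : Finset W) (hAB : ∀ K, cnt H A K = cnt H B K) : R A B := by
  obtain ⟨n, hn⟩ : ∃ n, (B \ A).card ≤ n := ⟨_, le_refl _⟩
  induction n generalizing A with
  | zero =>
    have hBA : B ⊆ A := by
      intro b hb
      by_contra hbA
      have : b ∈ B \ A := Finset.mem_sdiff.2 ⟨hb, hbA⟩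
      have := Finset.card_pos.2 ⟨b, this⟩
      omega
    have hAB' : A = B := by
      apply Finset.Subset.antisymm _ hBA
      intro a ha
      set K := H.connectedComponentMk a with hK
      have hsub : B.filter (fun v => H.connectedComponentMk v = K) ⊆
          A.filter (fun v => H.connectedComponentMk v = K) :=
        Finset.filter_subset_filter _ hBA
      have : A.filter (fun v => H.connectedComponentMk v = K) =
          B.filter (fun v => H.connectedComponentMk v = K) :=
        (Finset.eq_of_subset_of_card_le hsub (le_of_eq (hAB K))).symm
      have haK : a ∈ A.filter (fun v => H.connectedComponentMk v = K) :=
        Finset.mem_filter.2 ⟨ha, rfl⟩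
      rw [this] at haK
      exact (Finset.mem_filter.1 haK).1
    rw [hAB']; exact hrefl B
  | succ n ih =>
    by_cases h : B \ A = ∅
    · have hBA : B ⊆ A := Finset.sdiff_eq_empty_iff_subset.1 h
      have hAB' : A = B := by
        apply Finset.Subset.antisymm _ hBA
        intro a ha
        set K := H.connectedComponentMk a with hK
        have hsub : B.filter (fun v => H.connectedComponentMk v = K) ⊆
            A.filter (fun v => H.connectedComponentMk v = K) :=
          Finset.filter_subset_filter _ hBA
        have : A.filter (fun v => H.connectedComponentMk v = K) =
            B.filter (fun v => H.connectedComponentMk v = K) :=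
          (Finset.eq_of_subset_of_card_le hsub (le_of_eq (hAB K))).symm
        have haK : a ∈ A.filter (fun v => H.connectedComponentMk v = K) :=
          Finset.mem_filter.2 ⟨ha, rfl⟩
        rw [this] at haK
        exact (Finset.mem_filter.1 haK).1
      rw [hAB']; exact hrefl B
    · obtain ⟨w', hw'⟩ := Finset.nonempty_of_ne_empty h
      obtain ⟨hw'B, hw'A⟩ := Finset.mem_sdiff.1 hw'
      set K := H.connectedComponentMk w' with hK
      -- find w ∈ A, same component, w ∉ B
      have : ∃ w ∈ A.filter (fun v => H.connectedComponentMk v = K), w ∉ B := by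
        by_contra hcon
        push_neg at hcon
        have hsub : A.filter (fun v => H.connectedComponentMk v = K) ⊆
            B.filter (fun v => H.connectedComponentMk v = K) := by
          intro x hx
          exact Finset.mem_filter.2 ⟨hcon x hx, (Finset.mem_filter.1 hx).2⟩
        have heq : A.filter (fun v => H.connectedComponentMk v = K) =
            B.filter (fun v => H.connectedComponentMk v = K) :=
          Finset.eq_of_subset_of_card_le hsub (le_of_eq (hAB K).symm)
        have : w' ∈ A.filter (fun v => H.connectedComponentMk v = K) := by
          rw [heq]; exact Finset.mem_filter.2 ⟨hw'B, rfl⟩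
        exact hw'A (Finset.mem_filter.1 this).1
      obtain ⟨w, hwfil, hwB⟩ := this
      obtain ⟨hwA, hwK⟩ := Finset.mem_filter.1 hwfil
      have hreach : H.Reachable w' w := by
        rw [← SimpleGraph.ConnectedComponent.eq]; exact hwK.symm
      obtain ⟨q⟩ := hreach
      obtain ⟨A', hR, hcnt, hcard⟩ :=
        strictStep hstep htrans B q.length A w' w q le_rfl hw'B hw'A hwA hwB
      have : (B \ A').card ≤ n := by omega
      exact htrans hR (ih A' (fun K => (hcnt K).trans (hAB K)) this)


end TokenAux
namespace TokenAux
variable {k : ℕ} {X : Fin k → Type*} [∀ i, TopologicalSpace (X i)]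

/-- The collision-free subset of the composite configuration space. -/
def Safe (col : ∀ i j : Fin k, X i → X j → Prop) (m : Fin k → ℕ) :
    Set (∀ i, Fin (m i) → X i) :=
  {y | (∀ i, ∀ a b, a ≠ b → ¬ col i i (y i a) (y i b)) ∧
       (∀ i j, i ≠ j → ∀ a b, ¬ col i j (y i a) (y j b))}

def emb {m : Fin k → ℕ} {V : ∀ i, Set (X i)} (C : ∀ i, Fin (m i) → V i) :
    ∀ i, Fin (m i) → X i := fun i a => (C i a : X i)

variable {col : ∀ i j : Fin k, X i → X j → Prop} {m : Fin k → ℕ} {V : ∀ i, Set (X i)}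

lemma safe_emb
    (hVii : ∀ i, ∀ v ∈ V i, ∀ v' ∈ V i, v ≠ v' → ¬ col i i v v')
    (hVij : ∀ i j, i ≠ j → ∀ v ∈ V i, ∀ v' ∈ V j, ¬ col i j v v')
    (C : ∀ i, Fin (m i) → V i) (hCinj : ∀ i, Function.Injective (C i)) :
    emb C ∈ Safe col m := by
  constructor
  · intro i a b hab
    exact hVii i _ (C i a).2 _ (C i b).2
      (fun h => hab (hCinj i (Subtype.coe_injective h)))
  · intro i j hij a b
    exact hVij i j hij _ (C i a).2 _ (C j b).2

lemma image_update {α W : Type*} [DecidableEq α] [DecidableEq W] [Fintype α]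
    {S : α → W} (hS : Function.Injective S) (a₀ : α) {v' : W}
    (hv' : v' ∉ Finset.image S Finset.univ) :
    Finset.image (Function.update S a₀ v') Finset.univ =
      insert v' ((Finset.image S Finset.univ).erase (S a₀)) := by
  ext w
  simp only [Finset.mem_image, Finset.mem_insert, Finset.mem_erase, Finset.mem_univ,
    true_and]
  constructor
  · rintro ⟨a, rfl⟩
    by_cases ha : a = a₀
    · subst ha; rw [Function.update_self]; exact Or.inl rfl
    · rw [Function.update_of_ne ha]
      exact Or.inr ⟨fun h => ha (hS h), a, rfl⟩
  · rintro (rfl | ⟨hne, a, rfl⟩)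
    · exact ⟨a₀, Function.update_self _ _ _⟩
    · have ha : a ≠ a₀ := fun h => hne (by rw [h])
      exact ⟨a, Function.update_of_ne ha _ _⟩

lemma cnt_eq {W : Type*} (H : SimpleGraph W) (A : Finset W) (K : H.ConnectedComponent) :
    cnt H A K = Nat.card {x : W // x ∈ A ∧ H.connectedComponentMk x = K} := by
  unfold cnt
  rw [← Fintype.card_coe, ← Nat.card_eq_fintype_card]
  exact Nat.card_congr (Equiv.subtypeEquivRight (fun x => Finset.mem_filter))

lemma cnt_image {W : Type*} [DecidableEq W] (H : SimpleGraph W) {n : ℕ} {S : Fin n → W}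
    (hS : Function.Injective S) (K : H.ConnectedComponent) :
    cnt H (Finset.image S Finset.univ) K
      = Nat.card {a // H.connectedComponentMk (S a) = K} := by
  rw [cnt_eq]
  apply Nat.card_congr
  apply Equiv.symm
  apply Equiv.ofBijective
    (f := fun a : {a // H.connectedComponentMk (S a) = K} =>
      (⟨S a.1, Finset.mem_image_of_mem _ (Finset.mem_univ a.1), a.2⟩ :
        {x : W // x ∈ Finset.image S Finset.univ ∧ H.connectedComponentMk x = K}))
  constructor
  · intro a b hab
    exact Subtype.ext (hS (congrArg Subtype.val hab))
  · rintro ⟨x, hx, hxK⟩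
    obtain ⟨a, -, rfl⟩ := Finset.mem_image.1 hx
    exact ⟨⟨a, hxK⟩, rfl⟩

/-- Moving one robot of group `i₀` along one edge is a safe joined motion. -/
lemma joined_move
    (hsym : ∀ (i j : Fin k) (x : X i) (y : X j), col i j x y ↔ col j i y x)
    (hVii : ∀ i, ∀ v ∈ V i, ∀ v' ∈ V i, v ≠ v' → ¬ col i i v v')
    (hVij : ∀ i j, i ≠ j → ∀ v ∈ V i, ∀ v' ∈ V j, ¬ col i j v v')
    (G : ∀ i, SimpleGraph (V i))
    (p : ∀ i, ∀ v v' : V i, (G i).Adj v v' → unitInterval → X i)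
    (hp : ∀ (i : Fin k) (v v' : V i) (h : (G i).Adj v v'),
      Continuous (p i v v' h) ∧ p i v v' h 0 = (v : X i) ∧ p i v v' h 1 = (v' : X i) ∧
      (∀ t : unitInterval, ∀ u : V i, u ≠ v → u ≠ v' → ¬ col i i (p i v v' h t) (u : X i)) ∧
      (∀ t : unitInterval, ∀ j, j ≠ i → ∀ w ∈ V j, ¬ col i j (p i v v' h t) w))
    (C : ∀ i, Fin (m i) → V i) (hCinj : ∀ i, Function.Injective (C i))
    (i₀ : Fin k) (a₀ : Fin (m i₀)) (v' : V i₀)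
    (hadj : (G i₀).Adj (C i₀ a₀) v') (hfree : ∀ b, C i₀ b ≠ v') :
    JoinedIn (Safe col m) (emb C)
      (emb (Function.update C i₀ (Function.update (C i₀) a₀ v'))) := by
  obtain ⟨hcont, h0, h1, hsafe1, hsafe2⟩ := hp i₀ (C i₀ a₀) v' hadj
  set P : unitInterval → X i₀ := p i₀ (C i₀ a₀) v' hadj with hP
  set g : unitInterval → Fin (m i₀) → X i₀ :=
    fun t => Function.update (fun a => ((C i₀ a : X i₀))) a₀ (P t) with hg
  set f : unitInterval → ∀ i, Fin (m i) → X i :=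
    fun t => Function.update (emb C) i₀ (g t) with hf
  have fval₀ : ∀ t, f t i₀ = g t := fun t => Function.update_self _ _ _
  have fval : ∀ t i, i ≠ i₀ → f t i = emb C i := fun t i hi => Function.update_of_ne hi _ _
  have hfc : Continuous f := by
    apply continuous_pi
    intro i
    by_cases hi : i = i₀
    · subst hi
      simp only [hf, Function.update_self]
      apply continuous_pi
      intro a
      by_cases ha : a = a₀
      · subst ha
        simp only [hg, Function.update_self]
        exact hcont
      · simp only [hg, Function.update_of_ne ha]
        exact continuous_const
    · simp only [hf, Function.update_of_ne hi]
      exact continuous_const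
  have gval_a0 : ∀ t, g t a₀ = P t := fun t => Function.update_self _ _ _
  have gval : ∀ t a, a ≠ a₀ → g t a = ((C i₀ a : X i₀)) :=
    fun t a ha => Function.update_of_ne ha _ _
  have hf0 : f 0 = emb C := by
    have hgg : g 0 = fun a => ((C i₀ a : X i₀)) := by
      funext a
      by_cases ha : a = a₀
      · rw [ha, gval_a0, h0]
      · rw [gval 0 a ha]
    show Function.update (emb C) i₀ (g 0) = emb C
    rw [hgg]
    exact Function.update_eq_self _ _
  have hf1 : f 1 = emb (Function.update C i₀ (Function.update (C i₀) a₀ v')) := by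
    funext i
    by_cases hi : i = i₀
    · have hi' : i₀ = i := hi.symm
      subst hi'
      rw [fval₀]
      funext a
      show g 1 a = ((Function.update C i₀ (Function.update (C i₀) a₀ v') i₀ a : X i₀))
      rw [Function.update_self]
      by_cases ha : a = a₀
      · rw [ha, gval_a0 1, h1, Function.update_self]
      · rw [gval 1 a ha, Function.update_of_ne ha]
    · rw [fval 1 i hi]
      funext a
      show ((C i a : X i)) = ((Function.update C i₀ (Function.update (C i₀) a₀ v') i a : X i))
      rw [Function.update_of_ne hi]
  have hsafe : ∀ t, f t ∈ Safe col m := by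
    intro t
    constructor
    · intro i a b hab
      by_cases hi : i = i₀
      · have hi' : i₀ = i := hi.symm
        subst hi'
        rw [fval₀]
        by_cases ha : a = a₀
        · have hb : b ≠ a₀ := fun h => hab (ha.trans h.symm)
          rw [ha, gval_a0, gval t b hb]
          exact hsafe1 t (C i₀ b) (fun h => hb (hCinj i₀ h)) (hfree b)
        · by_cases hb : b = a₀
          · rw [hb, gval_a0, gval t a ha, hsym]
            exact hsafe1 t (C i₀ a) (fun h => ha (hCinj i₀ h)) (hfree a)
          · rw [gval t a ha, gval t b hb]
            exact hVii i₀ _ (C i₀ a).2 _ (C i₀ b).2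
              (fun h => hab (hCinj i₀ (Subtype.coe_injective h)))
      · rw [fval t i hi]
        exact hVii i _ (C i a).2 _ (C i b).2
          (fun h => hab (hCinj i (Subtype.coe_injective h)))
    · intro i j hij a b
      by_cases hi : i = i₀
      · have hi' : i₀ = i := hi.symm
        subst hi'
        rw [fval₀, fval t j (Ne.symm hij)]
        by_cases ha : a = a₀
        · rw [ha, gval_a0]
          exact hsafe2 t j (Ne.symm hij) _ (C j b).2
        · rw [gval t a ha]
          exact hVij i₀ j hij _ (C i₀ a).2 _ (C j b).2
      · by_cases hj : j = i₀
        · have hj' : i₀ = j := hj.symm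
          subst hj'
          rw [fval t i hi, fval₀]
          by_cases hb : b = a₀
          · rw [hb, gval_a0, hsym]
            exact hsafe2 t i hi _ (C i a).2
          · rw [gval t b hb]
            exact hVij i i₀ hij _ (C i a).2 _ (C i₀ b).2
        · rw [fval t i hi, fval t j hj]
          exact hVij i j hij _ (C i a).2 _ (C j b).2
  exact ⟨⟨⟨f, hfc⟩, hf0, hf1⟩, fun t => hsafe t⟩


end TokenAux

/-- Within a composite pebble graph on a composite pumped configuration, whose edge
paths satisfy the composite edge-planner guarantee, any two equivalent composite
configurations `ℂ ≡ ℂ'` are connected by simultaneous collision-free motions of all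
the groups of robots, up to permutations of the robots within each group. -/
theorem compositeMultiRobotPath_of_sameSignature {k : ℕ} (X : Fin k → Type*)
    [∀ i, TopologicalSpace (X i)]
    (col : ∀ i j : Fin k, X i → X j → Prop)
    (hsym : ∀ (i j : Fin k) (x : X i) (y : X j), col i j x y ↔ col j i y x)
    (m : Fin k → ℕ) (V : ∀ i, Set (X i))
    (hVfin : ∀ i, (V i).Finite)
    (hVii : ∀ i, ∀ v ∈ V i, ∀ v' ∈ V i, v ≠ v' → ¬ col i i v v')
    (hVij : ∀ i j, i ≠ j → ∀ v ∈ V i, ∀ v' ∈ V j, ¬ col i j v v')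
    (G : ∀ i, SimpleGraph (V i))
    (p : ∀ i, ∀ v v' : V i, (G i).Adj v v' → unitInterval → X i)
    (hp : ∀ (i : Fin k) (v v' : V i) (h : (G i).Adj v v'),
      Continuous (p i v v' h) ∧ p i v v' h 0 = (v : X i) ∧ p i v v' h 1 = (v' : X i) ∧
      (∀ t : unitInterval, ∀ u : V i, u ≠ v → u ≠ v' → ¬ col i i (p i v v' h t) (u : X i)) ∧
      (∀ t : unitInterval, ∀ j, j ≠ i → ∀ w ∈ V j, ¬ col i j (p i v v' h t) w))
    (C C' : ∀ i, Fin (m i) → V i)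
    (hC : ∀ i, Function.Injective (C i)) (hC' : ∀ i, Function.Injective (C' i))
    (hsig : ∀ i, SameSignature (G i) (C i) (C' i)) :
    ∃ σ : ∀ i, Equiv.Perm (Fin (m i)),
      ∃ f : ∀ i, unitInterval → (Fin (m i) → X i),
        (∀ i, Continuous (f i)) ∧
        (∀ i, f i 0 = fun a => (C i a : X i)) ∧
        (∀ i, f i 1 = fun a => (C' i ((σ i) a) : X i)) ∧
        (∀ t : unitInterval, ∀ i, ∀ a b : Fin (m i), a ≠ b → ¬ col i i (f i t a) (f i t b)) ∧
        (∀ t : unitInterval, ∀ i j, i ≠ j → ∀ (a : Fin (m i)) (b : Fin (m j)),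
          ¬ col i j (f i t a) (f j t b)) := by
  have hsafeC : TokenAux.emb C ∈ TokenAux.Safe col m := TokenAux.safe_emb hVii hVij C hC
  -- one group at a time
  have group : ∀ (i₀ : Fin k) (D : ∀ i, Fin (m i) → V i), (∀ i, Function.Injective (D i)) →
      (∀ K, TokenAux.cnt (G i₀) (Finset.image (D i₀) Finset.univ) K
            = TokenAux.cnt (G i₀) (Finset.image (C' i₀) Finset.univ) K) →
      ∃ E, (∀ j, j ≠ i₀ → E j = D j) ∧ (∀ i, Function.Injective (E i)) ∧
        Finset.image (E i₀) Finset.univ = Finset.image (C' i₀) Finset.univ ∧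
        JoinedIn (TokenAux.Safe col m) (TokenAux.emb D) (TokenAux.emb E) := by
    intro i₀ D₀ hD₀inj hcnt
    set R : Finset (V i₀) → Finset (V i₀) → Prop := fun A A' =>
      ∀ D : ∀ i, Fin (m i) → V i, (∀ i, Function.Injective (D i)) →
        Finset.image (D i₀) Finset.univ = A →
        ∃ E, (∀ j, j ≠ i₀ → E j = D j) ∧ (∀ i, Function.Injective (E i)) ∧
          Finset.image (E i₀) Finset.univ = A' ∧
          JoinedIn (TokenAux.Safe col m) (TokenAux.emb D) (TokenAux.emb E) with hRdef
    have hrefl : ∀ A, R A A := fun A D hD him =>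
      ⟨D, fun _ _ => rfl, hD, him, JoinedIn.refl (TokenAux.safe_emb hVii hVij D hD)⟩
    have htrans : ∀ {A B C'' : Finset (V i₀)}, R A B → R B C'' → R A C'' := by
      intro A B C'' h1 h2 D hD him
      obtain ⟨E, hEj, hEinj, hEim, hJ⟩ := h1 D hD him
      obtain ⟨F, hFj, hFinj, hFim, hJ'⟩ := h2 E hEinj hEim
      exact ⟨F, fun j hj => (hFj j hj).trans (hEj j hj), hFinj, hFim, hJ.trans hJ'⟩
    have hstep : ∀ A v v' A'', v ∈ A → v' ∉ A → (G i₀).Adj v v' →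
        (∀ x, x ∈ A'' ↔ x = v' ∨ x ∈ A ∧ x ≠ v) → R A A'' := by
      intro A v v' A'' hv hv' hadj hA'' D hD him
      subst him
      obtain ⟨a₀, _, ha₀⟩ := Finset.mem_image.1 hv
      have hfree : ∀ b, D i₀ b ≠ v' := by
        intro b hb
        exact hv' (hb ▸ Finset.mem_image_of_mem _ (Finset.mem_univ b))
      refine ⟨Function.update D i₀ (Function.update (D i₀) a₀ v'), ?_, ?_, ?_, ?_⟩
      · intro j hj; exact Function.update_of_ne hj _ _
      · intro i
        by_cases hii : i = i₀
        · have hi' : i₀ = i := hii.symm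
          subst hi'
          rw [Function.update_self]
          intro x y hxy
          by_cases hx : x = a₀ <;> by_cases hy : y = a₀
          · rw [hx, hy]
          · rw [hx, Function.update_self, Function.update_of_ne hy] at hxy
            exact absurd hxy.symm (hfree y)
          · rw [hy, Function.update_self, Function.update_of_ne hx] at hxy
            exact absurd hxy (hfree x)
          · rw [Function.update_of_ne hx, Function.update_of_ne hy] at hxy
            exact hD i₀ hxy
        · rw [Function.update_of_ne hii]; exact hD i
      · rw [Function.update_self]
        ext w
        rw [hA'' w]
        simp only [Finset.mem_image, Finset.mem_univ, true_and]
        constructor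
        · rintro ⟨a, rfl⟩
          by_cases ha : a = a₀
          · rw [ha, Function.update_self]; exact Or.inl rfl
          · rw [Function.update_of_ne ha]
            refine Or.inr ⟨⟨a, rfl⟩, ?_⟩
            rw [← ha₀]
            exact fun h => ha (hD i₀ h)
        · rintro (rfl | ⟨hxA, hxv⟩)
          · exact ⟨a₀, Function.update_self _ _ _⟩
          · obtain ⟨a, rfl⟩ := hxA
            have ha : a ≠ a₀ := fun h => hxv (by rw [h, ha₀])
            exact ⟨a, Function.update_of_ne ha _ _⟩
      · rw [← ha₀] at hadj
        exact TokenAux.joined_move hsym hVii hVij G p hp D hD i₀ a₀ v' hadj hfree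
    have hmain := TokenAux.token_reach hrefl (fun {A B C''} => htrans) hstep
      (Finset.image (D₀ i₀) Finset.univ) (Finset.image (C' i₀) Finset.univ) hcnt
    exact hmain D₀ hD₀inj rfl
  have key : ∀ s : Finset (Fin k), ∃ D, (∀ i, Function.Injective (D i)) ∧
      (∀ i, i ∉ s → D i = C i) ∧
      (∀ i ∈ s, Finset.image (D i) Finset.univ = Finset.image (C' i) Finset.univ) ∧
      JoinedIn (TokenAux.Safe col m) (TokenAux.emb C) (TokenAux.emb D) := by
    intro s
    induction s using Finset.induction_on with
    | empty =>
      exact ⟨C, hC, fun _ _ => rfl, fun i hi => absurd hi (Finset.notMem_empty i),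
        JoinedIn.refl hsafeC⟩
    | @insert i₀ s hi₀ ih =>
      obtain ⟨D, hDinj, hDfix, hDim, hJ⟩ := ih
      have hD0 : D i₀ = C i₀ := hDfix i₀ hi₀
      have hcnt : ∀ K, TokenAux.cnt (G i₀) (Finset.image (D i₀) Finset.univ) K
          = TokenAux.cnt (G i₀) (Finset.image (C' i₀) Finset.univ) K := by
        intro K
        rw [hD0, TokenAux.cnt_image (G i₀) (hC i₀), TokenAux.cnt_image (G i₀) (hC' i₀)]
        exact hsig i₀ K
      obtain ⟨E, hEj, hEinj, hEim, hJ'⟩ := group i₀ D hDinj hcnt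
      refine ⟨E, hEinj, ?_, ?_, hJ.trans hJ'⟩
      · intro i hi
        have h1 : i ≠ i₀ := fun h => hi (h ▸ Finset.mem_insert_self _ _)
        have h2 : i ∉ s := fun h => hi (Finset.mem_insert_of_mem h)
        rw [hEj i h1, hDfix i h2]
      · intro i hi
        rcases Finset.mem_insert.1 hi with rfl | hi'
        · exact hEim
        · have h1 : i ≠ i₀ := by rintro rfl; exact hi₀ hi'
          rw [hEj i h1]; exact hDim i hi'
  obtain ⟨D, hDinj, -, hDim, hJ⟩ := key Finset.univ
  have hmem : ∀ i a, ∃ b, C' i b = D i a := by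
    intro i a
    have : D i a ∈ Finset.image (C' i) Finset.univ := by
      rw [← hDim i (Finset.mem_univ i)]
      exact Finset.mem_image_of_mem _ (Finset.mem_univ a)
    obtain ⟨b, -, hb⟩ := Finset.mem_image.1 this
    exact ⟨b, hb⟩
  choose g hg using hmem
  have hginj : ∀ i, Function.Injective (g i) := by
    intro i x y hxy
    apply hDinj i
    rw [← hg i x, ← hg i y, hxy]
  have hgbij : ∀ i, Function.Bijective (g i) :=
    fun i => Finite.injective_iff_bijective.1 (hginj i)
  obtain ⟨γ, hγ⟩ := hJ
  refine ⟨fun i => Equiv.ofBijective (g i) (hgbij i), fun i t => γ t i, ?_, ?_, ?_, ?_, ?_⟩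
  · intro i; exact (continuous_apply i).comp γ.continuous
  · intro i
    show γ 0 i = _
    have h0 : γ 0 = TokenAux.emb C := γ.source
    rw [h0]; rfl
  · intro i
    show γ 1 i = _
    have h1 : γ 1 = TokenAux.emb D := γ.target
    rw [h1]
    funext a
    show ((D i a : X i)) = ((C' i (g i a) : X i))
    rw [hg i a]
  · intro t i a b hab
    exact (hγ t).1 i a b hab
  · intro t i j hij a b
    exact (hγ t).2 i j hij a b
end
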